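/- arXiv:2509.24434 — 5 statements merged into one kernel-verified Lean document; each statement's English description precedes it below -/
import Mathlib

section
/- Let n ≥ 1 and p > 0, and let δ > 0 be a Zador constant for (p, n). Then for every Jordan measurable compact set J ⊂ ℝⁿ with V_n(J) > 0 and every positive definite quadratic form q on ℝⁿ, lim_{m→∞} m^{2p/n} · inf{ ∫_J min_{s∈S} q(x − s)^p dx : S ⊂ J, #S = m } = δ · V_n(J)^{(n+2p)/n} · (det q)^{p/n}, where det q is the determinant of the symmetric matrix representing q. -/
open MeasureTheory Filter Metric Set
open scoped RealInnerProductSpace Topology NNReal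
open scoped Pointwise
open scoped MatrixOrder

noncomputable section

abbrev Euc (n : ℕ) : Type := EuclideanSpace ℝ (Fin n)

def hessQ {n : ℕ} (v : Euc n → ℝ) (x y : Euc n) : ℝ :=
  iteratedFDeriv ℝ 2 v x ![y, y]

def hessMat {n : ℕ} (v : Euc n → ℝ) (x : Euc n) : Matrix (Fin n) (Fin n) ℝ :=
  Matrix.of fun i j =>
    iteratedFDeriv ℝ 2 v x ![EuclideanSpace.single i 1, EuclideanSpace.single j 1]

def hessDet {n : ℕ} (v : Euc n → ℝ) (x : Euc n) : ℝ := (hessMat v x).det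

def IsPAC {n : ℕ} (m : ℕ) (X : Set (Euc n)) (v l : Euc n → ℝ) : Prop :=
  ∃ k : ℕ, 0 < k ∧ k ≤ m ∧ ∃ ψ : Fin k → (Euc n →ᵃ[ℝ] ℝ),
    (∀ x, l x = ⨆ j, ψ j x) ∧ ∀ x ∈ X, l x ≤ v x

def approxErr {n : ℕ} (p : ℝ) (m : ℕ) (X : Set (Euc n)) (v : Euc n → ℝ)
    (ω : Euc n × ℝ → ℝ) : ℝ :=
  sInf { r | ∃ l, IsPAC m X v l ∧ r = ∫ x in X, (v x - l x) ^ p * ω (x, v x) }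

def MemF {n : ℕ} (X : Set (Euc n)) (v : Euc n → ℝ) : Prop :=
  ConvexOn ℝ X v ∧ (∃ L : ℝ≥0, LipschitzOnWith L v X) ∧
    ContDiffOn ℝ 2 v (interior X) ∧ ∀ x ∈ interior X, (hessMat v x).PosDef

def subgrad {n : ℕ} (v : Euc n → ℝ) (x : Euc n) : Set (Euc n) :=
  {y | ∀ z, v x + ⟪y, z - x⟫ ≤ v z}

def subgradImage {n : ℕ} (v : Euc n → ℝ) (B : Set (Euc n)) : Set (Euc n) :=
  ⋃ x ∈ B, subgrad v x

def MASupport {n : ℕ} (v : Euc n → ℝ) : Set (Euc n) :=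
  {x | ∀ U : Set (Euc n), IsOpen U → x ∈ U → 0 < volume (subgradImage v U)}

def IsZadorConst (n : ℕ) (p δ : ℝ) : Prop :=
  ∀ J : Set (Euc n), IsCompact J → volume (frontier J) = 0 → 0 < volume J →
    Tendsto (fun m : ℕ => (m : ℝ) ^ (2 * p / (n : ℝ)) *
        sInf { r | ∃ S : Finset (Euc n), ↑S ⊆ J ∧ S.card = m ∧
          r = ∫ x in J, sInf ((fun s => ‖x - s‖ ^ (2 * p)) '' ↑S) })
      atTop (nhds (δ * (volume J).toReal ^ (((n : ℝ) + 2 * p) / (n : ℝ))))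

/-- Zador's theorem for a positive definite quadratic form `q(y) = yᵀAy`. -/
theorem zador_quadratic_form (n : ℕ) (hn : 1 ≤ n) (p : ℝ) (hp : 0 < p)
    (δ : ℝ) (hδ : 0 < δ) (hZ : IsZadorConst n p δ)
    (J : Set (Euc n)) (hJc : IsCompact J) (hJjordan : volume (frontier J) = 0)
    (hJpos : 0 < volume J)
    (A : Matrix (Fin n) (Fin n) ℝ) (hA : A.PosDef) :
    Tendsto (fun m : ℕ => (m : ℝ) ^ (2 * p / (n : ℝ)) *
        sInf { r | ∃ S : Finset (Euc n), ↑S ⊆ J ∧ S.card = m ∧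
          r = ∫ x in J,
            sInf ((fun s => (∑ i, ∑ j, A i j * (x - s) i * (x - s) j) ^ p) '' ↑S) })
      atTop
      (nhds (δ * (volume J).toReal ^ (((n : ℝ) + 2 * p) / (n : ℝ)) *
        A.det ^ (p / (n : ℝ)))) := by
  classical
  have hS : (CFC.sqrt A).PosSemidef := Matrix.nonneg_iff_posSemidef.mp (CFC.sqrt_nonneg A)
  set Sq : Matrix (Fin n) (Fin n) ℝ := CFC.sqrt A with hSq
  have hSA : Sq * Sq = A := CFC.sqrt_mul_sqrt_self A hA.posSemidef.nonneg
  have hdetA : (0:ℝ) < A.det := hA.det_pos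
  have hd2 : Sq.det * Sq.det = A.det := by rw [← Matrix.det_mul, hSA]
  have hdnn : 0 ≤ Sq.det := by
    rw [hS.isHermitian.det_eq_prod_eigenvalues]
    push_cast
    exact Finset.prod_nonneg fun i _ => hS.eigenvalues_nonneg i
  have hd : 0 < Sq.det := by
    rcases hdnn.lt_or_eq with h | h
    · exact h
    · exfalso; rw [← h, mul_zero] at hd2; rw [← hd2] at hdetA; exact lt_irrefl _ hdetA
  set d := Sq.det with hdd
  set Lf : Euc n →ₗ[ℝ] Euc n := Matrix.toEuclideanLin Sq with hLf
  have hdet : LinearMap.det Lf = d := by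
    rw [hLf, Matrix.toEuclideanLin_eq_toLin, LinearMap.det_toLin]
  have hdet0 : LinearMap.det Lf ≠ 0 := by rw [hdet]; exact hd.ne'
  set Leq : Euc n ≃ₗ[ℝ] Euc n := LinearMap.equivOfDetNeZero Lf hdet0 with hLeq
  have hLeqf : ⇑Leq = ⇑Lf := by
    funext x; rfl
  have hinj : Function.Injective (⇑Lf) := hLeqf ▸ Leq.injective
  set Lc : Euc n →L[ℝ] Euc n := LinearMap.toContinuousLinearMap Lf with hLc
  have hLcf : ⇑Lc = ⇑Lf := rfl
  set J' : Set (Euc n) := (⇑Lf) '' J with hJ'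
  have hJ'c : IsCompact J' := hJc.image Lc.continuous
  have hJmeas : MeasurableSet J := hJc.isClosed.measurableSet
  have himg : ∀ s : Set (Euc n), volume ((⇑Lf) '' s) = ENNReal.ofReal d * volume s := by
    intro s
    rw [Measure.addHaar_image_linearMap, hdet, abs_of_pos hd]
  have hfr : frontier J' = (⇑Lf) '' frontier J := by
    have h := (Leq.toContinuousLinearEquiv.toHomeomorph).image_frontier J
    simp only [ContinuousLinearEquiv.coe_toHomeomorph] at h
    rw [hJ', ← hLeqf]
    rw [LinearEquiv.coe_toContinuousLinearEquiv'] at h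
    exact h.symm
  have hfront : volume (frontier J') = 0 := by
    rw [hfr, himg, hJjordan, mul_zero]
  have hJ'pos : 0 < volume J' := by
    rw [hJ', himg]
    exact ENNReal.mul_pos (ENNReal.ofReal_pos.mpr hd).ne' hJpos.ne'
  -- the quadratic form identity
  have hquad : ∀ z : Euc n, (∑ i, ∑ j, A i j * z i * z j) = ‖Lf z‖ ^ (2:ℕ) := by
    intro z
    have hadj : LinearMap.adjoint Lf = Lf := by
      rw [hLf, ← Matrix.toEuclideanLin_conjTranspose_eq_adjoint, hS.1]
    have h1 : Matrix.toEuclideanLin A z = Lf (Lf z) := by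
      rw [← hSA, hLf]
      ext i
      simp [Matrix.toEuclideanLin_apply, Matrix.mulVec_mulVec]
    have h2 : ⟪z, Lf (Lf z)⟫ = ⟪Lf z, Lf z⟫ := by
      have h : Lf (Lf z) = (LinearMap.adjoint Lf) (Lf z) := by rw [hadj]
      rw [h, LinearMap.adjoint_inner_right]
    have h3 : ⟪z, Matrix.toEuclideanLin A z⟫ = ∑ i, ∑ j, A i j * z i * z j := by
      simp only [PiLp.inner_apply, RCLike.inner_apply, starRingEnd_apply, star_trivial]
      refine Finset.sum_congr rfl fun i _ => ?_
      have happ : (Matrix.toEuclideanLin A z) i = ∑ j, A i j * z j := rfl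
      rw [happ, Finset.sum_mul]
      exact Finset.sum_congr rfl fun j _ => by ring
    rw [← h3, h1, h2, real_inner_self_eq_norm_sq]
  have hpow : ∀ z : Euc n, (∑ i, ∑ j, A i j * z i * z j) ^ p = ‖Lf z‖ ^ (2 * p) := by
    intro z
    rw [hquad z, ← Real.rpow_natCast (‖Lf z‖) 2, ← Real.rpow_mul (norm_nonneg _)]
    norm_num
  -- change of variables
  have key : ∀ g : Euc n → ℝ,
      ∫ x in J', g x = d * ∫ x in J, g (Lf x) := by
    intro g
    have hderiv : ∀ x ∈ J, HasFDerivWithinAt (⇑Lf) Lc J x :=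
      fun x _ => Lc.hasFDerivAt.hasFDerivWithinAt
    rw [hJ', integral_image_eq_integral_abs_det_fderiv_smul volume hJmeas hderiv hinj.injOn g]
    have hcd : (Lc : Euc n →L[ℝ] Euc n).det = d := by
      rw [ContinuousLinearMap.det]
      rw [show ((Lc : Euc n →L[ℝ] Euc n) : Euc n →ₗ[ℝ] Euc n) = Lf from
        LinearMap.coe_toContinuousLinearMap Lf, hdet]
    simp only [hcd, abs_of_pos hd, smul_eq_mul]
    rw [MeasureTheory.integral_const_mul]
  -- integrand identity
  have hfunx : ∀ x : Euc n, (fun s : Euc n =>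
      (∑ i, ∑ j, A i j * (x - s) i * (x - s) j) ^ p) = fun s : Euc n => ‖Lf x - Lf s‖ ^ (2 * p) := by
    intro x
    funext s
    rw [hpow (x - s), map_sub]
  have hmain : ∀ S : Finset (Euc n),
      d⁻¹ * ∫ x in J', sInf ((fun s => ‖x - s‖ ^ (2*p)) '' ↑(S.image Lf))
        = ∫ x in J, sInf ((fun s => (∑ i, ∑ j, A i j * (x-s) i * (x-s) j) ^ p) '' ↑S) := by
    intro S
    rw [key, inv_mul_cancel_left₀ hd.ne']
    refine MeasureTheory.setIntegral_congr_fun hJmeas fun x _ => ?_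
    rw [Finset.coe_image, Set.image_image, hfunx x]
  -- the set identity
  have hsetQ : ∀ m : ℕ,
      { r | ∃ S : Finset (Euc n), ↑S ⊆ J ∧ S.card = m ∧
          r = ∫ x in J, sInf ((fun s => (∑ i, ∑ j, A i j * (x - s) i * (x - s) j) ^ p) '' ↑S) }
      = (fun r => d⁻¹ * r) ''
        { r | ∃ S : Finset (Euc n), ↑S ⊆ J' ∧ S.card = m ∧
          r = ∫ x in J', sInf ((fun s => ‖x - s‖ ^ (2 * p)) '' ↑S) } := by
    intro m
    ext r
    constructor
    · rintro ⟨S, hSJ, hScard, rfl⟩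
      refine ⟨∫ x in J', sInf ((fun s => ‖x - s‖ ^ (2*p)) '' ↑(S.image Lf)),
        ⟨S.image Lf, ?_, ?_, rfl⟩, hmain S⟩
      · rw [Finset.coe_image, hJ']; exact Set.image_mono hSJ
      · rw [Finset.card_image_of_injective S hinj, hScard]
    · rintro ⟨r', ⟨T, hTJ, hTcard, rfl⟩, rfl⟩
      have hLinv : ∀ x : Euc n, Leq.symm (Lf x) = x := by
        intro x; rw [← hLeqf]; exact Leq.symm_apply_apply x
      have hTimg : (T.image Leq.symm).image Lf = T := by
        ext t
        simp only [Finset.mem_image]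
        constructor
        · rintro ⟨y, ⟨u, hu, rfl⟩, rfl⟩
          rcases hTJ hu with ⟨x, _, rfl⟩
          rw [hLinv x]; exact hu
        · intro ht
          refine ⟨Leq.symm t, ⟨t, ht, rfl⟩, ?_⟩
          rcases hTJ ht with ⟨x, _, rfl⟩
          rw [hLinv x]
      refine ⟨T.image Leq.symm, ?_, ?_, ?_⟩
      · intro y hy
        rcases Finset.mem_coe.mp hy with hy'
        rcases Finset.mem_image.mp hy' with ⟨t, ht, rfl⟩
        rcases hTJ ht with ⟨x, hx, rfl⟩
        rw [hLinv x]; exact hx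
      · rw [Finset.card_image_of_injective T Leq.symm.injective, hTcard]
      · rw [← hmain (T.image Leq.symm), hTimg]
  -- scaling of infima
  have hsinf : ∀ E : Set ℝ, sInf ((fun r => d⁻¹ * r) '' E) = d⁻¹ * sInf E := by
    intro E
    have himg2 : (fun r => d⁻¹ * r) '' E = d⁻¹ • E := by
      ext y
      simp [Set.mem_smul_set, smul_eq_mul]
    rw [himg2, Real.sInf_smul_of_nonneg (inv_nonneg.mpr hdnn), smul_eq_mul]
  -- apply the Zador hypothesis to J'
  have hZ' := hZ J' hJ'c hfront hJ'pos
  have hV : (volume J').toReal = d * (volume J).toReal := by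
    rw [hJ', himg, ENNReal.toReal_mul, ENNReal.toReal_ofReal hdnn]
  have hn0 : (n:ℝ) ≠ 0 := Nat.cast_ne_zero.mpr (by omega)
  have hVnn : (0:ℝ) ≤ (volume J).toReal := ENNReal.toReal_nonneg
  have hlim : d⁻¹ * (δ * (volume J').toReal ^ (((n:ℝ) + 2*p)/(n:ℝ)))
      = δ * (volume J).toReal ^ (((n:ℝ) + 2*p)/(n:ℝ)) * A.det ^ (p/(n:ℝ)) := by
    rw [hV]
    have hβ : ((n:ℝ) + 2*p)/(n:ℝ) = 1 + 2*p/(n:ℝ) := by field_simp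
    rw [hβ, Real.mul_rpow hdnn hVnn]
    have hdpow : d ^ ((1:ℝ) + 2*p/(n:ℝ)) = d * A.det ^ (p/(n:ℝ)) := by
      rw [Real.rpow_add hd, Real.rpow_one]
      congr 1
      rw [show 2*p/(n:ℝ) = 2 * (p/(n:ℝ)) by ring, Real.rpow_mul hdnn,
        show (2:ℝ) = ((2:ℕ):ℝ) by norm_num, Real.rpow_natCast, pow_two, hd2]
    rw [hdpow]
    field_simp
  have hfin := hZ'.const_mul d⁻¹
  rw [hlim] at hfin
  refine Tendsto.congr (fun m => ?_) hfin
  rw [hsetQ m, hsinf]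
  ring
end
end

section
/- Let n ≥ 1 and p > 0, let Ω ⊂ ℝⁿ be an open bounded convex set, and let v : Ω → ℝ be a convex function of class C² on Ω that is Lipschitz with constant L > 0. Then ∫_Ω (det D²v(x))^{p/(n+2p)} dx ≤ V_n(Ω)^{(n+p)/(n+2p)} · ( κ_n L^n )^{p/(n+2p)}, where V_n denotes n-dimensional Lebesgue measure and κ_n = V_n(B^n) is the volume of the Euclidean unit ball in ℝⁿ. In particular, the integral is finite. -/
open MeasureTheory Filter Metric Set
open scoped RealInnerProductSpace Topology NNReal
open scoped ENNReal

set_option maxHeartbeats 1600000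
set_option linter.unusedVariables false
noncomputable section

section AuxLemmas

lemma my_det_le_det_add_smul_one {n : ℕ} {M : Matrix (Fin n) (Fin n) ℝ}
    (hM : M.PosSemidef) {ε : ℝ} (hε : 0 ≤ ε) : M.det ≤ (M + ε • 1).det := by
  classical
  have hA : M.IsHermitian := hM.1
  set U : Matrix (Fin n) (Fin n) ℝ := (hA.eigenvectorUnitary : Matrix (Fin n) (Fin n) ℝ) with hUdef
  have hU : U * star U = 1 := Matrix.mem_unitaryGroup_iff.mp hA.eigenvectorUnitary.2
  have key : ∀ D : Matrix (Fin n) (Fin n) ℝ, (U * D * star U).det = D.det := by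
    intro D
    rw [Matrix.det_mul_right_comm, hU, Matrix.one_mul]
  have h0 : M = U * Matrix.diagonal (fun i => hA.eigenvalues i) * star U := by
    have := hA.spectral_theorem
    simpa using this
  have h1 : M + ε • 1 = U * Matrix.diagonal (fun i => hA.eigenvalues i + ε) * star U := by
    have hd : Matrix.diagonal (fun i => hA.eigenvalues i + ε)
        = Matrix.diagonal (fun i => hA.eigenvalues i) + ε • (1 : Matrix (Fin n) (Fin n) ℝ) := by
      rw [Matrix.smul_one_eq_diagonal, ← Matrix.diagonal_add]
    rw [hd, Matrix.mul_add, Matrix.add_mul, ← h0]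
    congr 1
    rw [Matrix.mul_smul, Matrix.mul_one, Matrix.smul_mul, hU]
  rw [congrArg Matrix.det h0, congrArg Matrix.det h1, key, key,
    Matrix.det_diagonal, Matrix.det_diagonal]
  apply Finset.prod_le_prod
  · intro i _; exact hM.eigenvalues_nonneg i
  · intro i _; linarith

lemma my_psd_det_nonneg {n : ℕ} {M : Matrix (Fin n) (Fin n) ℝ}
    (hM : M.PosSemidef) : 0 ≤ M.det := by
  classical
  rw [hM.1.det_eq_prod_eigenvalues]
  exact Finset.prod_nonneg fun i _ => by simpa using hM.eigenvalues_nonneg i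

lemma my_fderiv_mono {n : ℕ} {Om : Set (Euc n)} (hOopen : IsOpen Om)
    {v : Euc n → ℝ} (hvconv : ConvexOn ℝ Om v)
    (hdiff : ∀ z ∈ Om, DifferentiableAt ℝ v z)
    {x y : Euc n} (hx : x ∈ Om) (hy : y ∈ Om) :
    fderiv ℝ v x (y - x) ≤ fderiv ℝ v y (y - x) := by
  set c : ℝ →ᵃ[ℝ] Euc n := AffineMap.lineMap x y with hc
  have hcap : ∀ t : ℝ, c t = x + t • (y - x) := by
    intro t; simp [hc, AffineMap.lineMap_apply]; module
  set S : Set ℝ := c ⁻¹' Om with hS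
  have hψ : ConvexOn ℝ S (v ∘ c) := hvconv.comp_affineMap c
  have h0S : (0 : ℝ) ∈ S := by
    simp only [hS, mem_preimage, hcap]; simpa using hx
  have h1S : (1 : ℝ) ∈ S := by
    simp only [hS, mem_preimage, hcap]
    have : x + (1:ℝ) • (y - x) = y := by module
    rwa [this]
  have hder : ∀ t ∈ S, HasDerivAt (v ∘ c) (fderiv ℝ v (c t) (y - x)) t := by
    intro t ht
    have hline : HasDerivAt (fun s : ℝ => c s) (y - x) t := by
      have h2 : HasDerivAt (fun s : ℝ => x + s • (y - x)) ((1 : ℝ) • (y - x)) t :=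
        ((hasDerivAt_id t).smul_const (y - x)).const_add x
      simp only [one_smul] at h2
      have : (fun s : ℝ => c s) = fun s : ℝ => x + s • (y - x) := funext hcap
      rw [this]; exact h2
    exact (hdiff (c t) ht).hasFDerivAt.comp_hasDerivAt t hline
  have hmono : MonotoneOn (deriv (v ∘ c)) S :=
    hψ.monotoneOn_deriv (fun t ht => (hder t ht).differentiableAt)
  have e0 : deriv (v ∘ c) 0 = fderiv ℝ v x (y - x) := by
    have hc0 : c (0:ℝ) = x := by rw [hcap]; module
    rw [(hder 0 h0S).deriv, hc0]
  have e1 : deriv (v ∘ c) 1 = fderiv ℝ v y (y - x) := by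
    have hc1 : c (1:ℝ) = y := by rw [hcap]; module
    rw [(hder 1 h1S).deriv, hc1]
  calc fderiv ℝ v x (y - x) = deriv (v ∘ c) 0 := e0.symm
    _ ≤ deriv (v ∘ c) 1 := hmono h0S h1S zero_le_one
    _ = fderiv ℝ v y (y - x) := e1

lemma my_quad_nonneg {n : ℕ} {Om : Set (Euc n)} (hOopen : IsOpen Om)
    {v : Euc n → ℝ} (hvconv : ConvexOn ℝ Om v)
    (hdiff : ∀ z ∈ Om, DifferentiableAt ℝ v z)
    {x : Euc n} (hBat : HasFDerivAt (fderiv ℝ v) (fderiv ℝ (fderiv ℝ v) x) x)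
    (hx : x ∈ Om) (u : Euc n) :
    0 ≤ fderiv ℝ (fderiv ℝ v) x u u := by
  set B : Euc n →L[ℝ] Euc n →L[ℝ] ℝ := fderiv ℝ (fderiv ℝ v) x with hB
  set d : ℝ → ℝ := fun t => fderiv ℝ v (x + t • u) u with hd
  set S : Set ℝ := (fun t : ℝ => x + t • u) ⁻¹' Om with hSdef
  have hSopen : IsOpen S :=
    hOopen.preimage (by continuity)
  have h0S : (0 : ℝ) ∈ S := by
    simp only [hSdef, mem_preimage, zero_smul, add_zero]; exact hx
  have hcurve : HasDerivAt (fun t : ℝ => x + t • u) u 0 := by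
    have h2 : HasDerivAt (fun s : ℝ => x + s • u) ((1 : ℝ) • u) 0 :=
      ((hasDerivAt_id (0:ℝ)).smul_const u).const_add x
    simpa using h2
  have hcomp : HasDerivAt (fun t : ℝ => fderiv ℝ v (x + t • u)) (B u) 0 := by
    have hpt : x + (0:ℝ) • u = x := by simp
    have hBat' : HasFDerivAt (fderiv ℝ v) B ((fun t : ℝ => x + t • u) 0) := by
      rw [show (fun t : ℝ => x + t • u) 0 = x by simp]; exact hBat
    exact hBat'.comp_hasDerivAt 0 hcurve
  have hdd : HasDerivAt d (B u u) 0 :=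
    (ContinuousLinearMap.apply ℝ ℝ u).hasFDerivAt.comp_hasDerivAt 0 hcomp
  have hmonod : ∀ s ∈ S, ∀ t ∈ S, s ≤ t → d s ≤ d t := by
    intro s hs t ht hst
    rcases eq_or_lt_of_le hst with rfl | hlt
    · exact le_rfl
    have key := my_fderiv_mono hOopen hvconv hdiff hs ht
    have hba : (x + t • u) - (x + s • u) = (t - s) • u := by module
    rw [hba, _root_.map_smul, _root_.map_smul] at key
    simp only [smul_eq_mul] at key
    exact le_of_mul_le_mul_left key (by linarith)
  have hslope : Tendsto (slope d 0) (𝓝[>] (0:ℝ)) (𝓝 (B u u)) :=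
    (hasDerivAt_iff_tendsto_slope.mp hdd).mono_left
      (nhdsWithin_mono 0 (fun t ht => ne_of_gt ht))
  have hev : ∀ᶠ t in 𝓝[>] (0:ℝ), 0 ≤ slope d 0 t := by
    filter_upwards [mem_nhdsWithin_of_mem_nhds (hSopen.mem_nhds h0S),
      self_mem_nhdsWithin] with t htS (htpos : 0 < t)
    rw [slope_def_field]
    have := hmonod 0 h0S t htS htpos.le
    have h' : (d t - d 0) / (t - 0) ≥ 0 := by
      apply div_nonneg (by linarith) (by linarith)
    simpa [div_eq_iff, slope] using h'
  exact ge_of_tendsto hslope hev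

lemma my_hessMat_apply {n : ℕ} (v : Euc n → ℝ) (x : Euc n) (i j : Fin n) :
    hessMat v x i j = fderiv ℝ (fderiv ℝ v) x (EuclideanSpace.single i 1)
      (EuclideanSpace.single j 1) := by
  show iteratedFDeriv ℝ 2 v x ![_, _] = _
  rw [iteratedFDeriv_two_apply]
  simp

lemma my_posSemidef_of_bilinear {n : ℕ} (B : Euc n →L[ℝ] Euc n →L[ℝ] ℝ)
    (hsymm : ∀ a b, B a b = B b a) (hquad : ∀ u, 0 ≤ B u u) :
    (Matrix.of fun i j =>
      B (EuclideanSpace.single i 1) (EuclideanSpace.single j 1)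
      : Matrix (Fin n) (Fin n) ℝ).PosSemidef := by
  set e : Fin n → Euc n := fun i => EuclideanSpace.single i 1 with he
  rw [Matrix.posSemidef_iff_dotProduct_mulVec]
  constructor
  · ext i j
    simp only [Matrix.conjTranspose_apply, Matrix.of_apply, star_trivial]
    exact hsymm _ _
  · intro u
    set uh : Euc n := ∑ i, u i • e i with huh
    have hexp : ∀ w : Euc n, B uh w = ∑ i, u i * B (e i) w := by
      intro w
      rw [huh, map_sum]
      simp only [_root_.map_smul, ContinuousLinearMap.coe_smul', Pi.smul_apply,
        ContinuousLinearMap.sum_apply, smul_eq_mul]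
    have hexp2 : B uh uh = ∑ i, ∑ j, u i * (u j * B (e i) (e j)) := by
      rw [hexp uh]
      refine Finset.sum_congr rfl fun i _ => ?_
      rw [huh, map_sum, Finset.mul_sum]
      refine Finset.sum_congr rfl fun j _ => ?_
      simp only [_root_.map_smul, smul_eq_mul]
    have hdot : dotProduct (star u) (Matrix.mulVec (Matrix.of fun i j => B (e i) (e j)) u)
        = ∑ i, ∑ j, u i * (u j * B (e i) (e j)) := by
      simp only [star_trivial, dotProduct, Matrix.mulVec, Matrix.of_apply]
      refine Finset.sum_congr rfl fun i _ => ?_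
      rw [Finset.mul_sum]
      refine Finset.sum_congr rfl fun j _ => ?_
      show u i * (B (e i) (e j) * u j) = u i * (u j * B (e i) (e j))
      ring
    rw [hdot, ← hexp2]
    exact hquad uh

lemma my_hessMat_psd {n : ℕ} {Om : Set (Euc n)} (hOopen : IsOpen Om)
    {v : Euc n → ℝ} (hvconv : ConvexOn ℝ Om v) (hC2 : ContDiffOn ℝ 2 v Om)
    {z : Euc n} (hz : z ∈ Om) : (hessMat v z).PosSemidef := by
  have hdiff : ∀ w ∈ Om, DifferentiableAt ℝ v w := fun w hw =>
    (hC2.contDiffAt (hOopen.mem_nhds hw)).differentiableAt two_ne_zero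
  have hBat : HasFDerivAt (fderiv ℝ v) (fderiv ℝ (fderiv ℝ v) z) z := by
    have h1 : ContDiffAt ℝ 1 (fderiv ℝ v) z :=
      (hC2.contDiffAt (hOopen.mem_nhds hz)).fderiv_right (by norm_num)
    exact (h1.differentiableAt one_ne_zero).hasFDerivAt
  have hsymm : ∀ a b, fderiv ℝ (fderiv ℝ v) z a b = fderiv ℝ (fderiv ℝ v) z b a := by
    intro a b
    exact second_derivative_symmetric_of_eventually
      (Filter.eventually_of_mem (hOopen.mem_nhds hz)
        (fun y hy => (hdiff y hy).hasFDerivAt)) hBat a b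
  have hres := my_posSemidef_of_bilinear (fderiv ℝ (fderiv ℝ v) z) hsymm
    (my_quad_nonneg hOopen hvconv hdiff hBat hz)
  have heq : hessMat v z = Matrix.of fun i j =>
      fderiv ℝ (fderiv ℝ v) z (EuclideanSpace.single i 1) (EuclideanSpace.single j 1) := by
    ext i j; exact my_hessMat_apply v z i j
  rwa [heq]

lemma my_lintegral_hessDet_le {n : ℕ} {Om : Set (Euc n)}
    (hOopen : IsOpen Om)
    {v : Euc n → ℝ} (hvconv : ConvexOn ℝ Om v) (hC2 : ContDiffOn ℝ 2 v Om)
    {L : ℝ} (hL : 0 < L) (hlipOn : LipschitzOnWith (Real.toNNReal L) v Om)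
    {ε R : ℝ} (hε : 0 < ε) (hR : 0 ≤ R) (hOR : Om ⊆ closedBall 0 R) :
    ∫⁻ z in Om, ENNReal.ofReal (hessDet v z) ≤
      volume (closedBall (0 : Euc n) (L + ε * R)) := by
  classical
  have hOmeas : MeasurableSet Om := hOopen.measurableSet
  have hdiff : ∀ z ∈ Om, DifferentiableAt ℝ v z := fun z hz =>
    (hC2.contDiffAt (hOopen.mem_nhds hz)).differentiableAt two_ne_zero
  have hBat : ∀ z ∈ Om, HasFDerivAt (fderiv ℝ v) (fderiv ℝ (fderiv ℝ v) z) z := by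
    intro z hz
    have h1 : ContDiffAt ℝ 1 (fderiv ℝ v) z :=
      (hC2.contDiffAt (hOopen.mem_nhds hz)).fderiv_right (by norm_num)
    exact (h1.differentiableAt one_ne_zero).hasFDerivAt
  set B : Euc n → (Euc n →L[ℝ] Euc n →L[ℝ] ℝ) := fun z => fderiv ℝ (fderiv ℝ v) z with hBdef
  have hsymm : ∀ z ∈ Om, ∀ a b, B z a b = B z b a := by
    intro z hz a b
    exact second_derivative_symmetric_of_eventually
      (Filter.eventually_of_mem (hOopen.mem_nhds hz)
        (fun y hy => (hdiff y hy).hasFDerivAt))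
      (hBat z hz) a b
  have hPSD : ∀ z ∈ Om, (hessMat v z).PosSemidef := fun z hz =>
    my_hessMat_psd hOopen hvconv hC2 hz
  set φ := (InnerProductSpace.toDual ℝ (Euc n)).symm with hφdef
  set φe : StrongDual ℝ (Euc n) ≃L[ℝ] Euc n := φ.toContinuousLinearEquiv with hφe
  set g : Euc n → Euc n := fun z => φ (fderiv ℝ v z) + ε • z with hg
  set A : Euc n → (Euc n →L[ℝ] Euc n) := fun z =>
    ((φe : StrongDual ℝ (Euc n) →L[ℝ] Euc n).comp (B z))
      + ε • ContinuousLinearMap.id ℝ (Euc n) with hA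
  have hφap : ∀ y : StrongDual ℝ (Euc n), (φe : _ →L[ℝ] _) y = φ y := by
    intro y; simp [hφe]
  have hφap1 : ∀ y : StrongDual ℝ (Euc n), φe y = φ y := fun y => by
    simp [hφe]
  -- derivative of g
  have hgder : ∀ z ∈ Om, HasFDerivAt g (A z) z := by
    intro z hz
    have h1 : HasFDerivAt (fun w => φ (fderiv ℝ v w))
        ((φe : StrongDual ℝ (Euc n) →L[ℝ] Euc n).comp (B z)) z := by
      have hc : HasFDerivAt (fun y : StrongDual ℝ (Euc n) => φ y)
          (φe : StrongDual ℝ (Euc n) →L[ℝ] Euc n) (fderiv ℝ v z) := by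
        have := (φe : StrongDual ℝ (Euc n) →L[ℝ] Euc n).hasFDerivAt
          (x := fderiv ℝ v z)
        convert this using 1
        funext y; exact (hφap1 y).symm
      exact hc.comp z (hBat z hz)
    have h2 : HasFDerivAt (fun w : Euc n => ε • w)
        (ε • ContinuousLinearMap.id ℝ (Euc n)) z := (hasFDerivAt_id z).const_smul ε
    exact h1.add h2
  -- injectivity
  have hinj : InjOn g Om := by
    intro a ha b hb hab
    by_contra hne
    have hball : (0:ℝ) < ‖b - a‖ := by
      rw [norm_pos_iff, sub_ne_zero]; exact fun h => hne h.symm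
    have hz : (0:ℝ) = ⟪g b - g a, b - a⟫ := by rw [hab]; simp
    have hexp : g b - g a = φ (fderiv ℝ v b - fderiv ℝ v a) + ε • (b - a) := by
      simp only [hg, map_sub, smul_sub]
      abel
    have hinner : ⟪g b - g a, b - a⟫
        = (fderiv ℝ v b (b - a) - fderiv ℝ v a (b - a)) + ε * ‖b - a‖ ^ 2 := by
      rw [hexp, inner_add_left, real_inner_smul_left, real_inner_self_eq_norm_sq,
        InnerProductSpace.toDual_symm_apply]
      simp [ContinuousLinearMap.sub_apply]
    have hmono := my_fderiv_mono hOopen hvconv hdiff ha hb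
    nlinarith [hz, hinner, hmono, mul_pos hε (pow_pos hball 2)]
  -- determinant
  have hdet : ∀ z ∈ Om, hessDet v z ≤ |(A z).det| := by
    intro z hz
    set b := (EuclideanSpace.basisFun (Fin n) ℝ).toBasis with hb
    have hmat : LinearMap.toMatrix b b ((A z) : Euc n →ₗ[ℝ] Euc n)
        = hessMat v z + ε • 1 := by
      ext i j
      rw [LinearMap.toMatrix_apply]
      have hbj : b j = EuclideanSpace.single j (1:ℝ) := by
        simp [hb, EuclideanSpace.basisFun_apply]
      have hrepr : ∀ w : Euc n, b.repr w i = w i := by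
        intro w; simp [hb]
      rw [hbj, hrepr]
      have happ : ((A z) : Euc n →ₗ[ℝ] Euc n) (EuclideanSpace.single j (1:ℝ))
          = φ (B z (EuclideanSpace.single j 1)) + ε • EuclideanSpace.single j (1:ℝ) := by
        simp [hA, hφap, hφap1, ContinuousLinearMap.add_apply]
      rw [happ]
      have hcoord : (φ (B z (EuclideanSpace.single j 1))) i
          = B z (EuclideanSpace.single j 1) (EuclideanSpace.single i 1) := by
        have h1 : ⟪EuclideanSpace.single i (1:ℝ), φ (B z (EuclideanSpace.single j 1))⟫
            = (φ (B z (EuclideanSpace.single j 1))) i := by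
          rw [EuclideanSpace.inner_single_left]; simp
        rw [← h1, real_inner_comm, InnerProductSpace.toDual_symm_apply]
      have hsingle : (EuclideanSpace.single j (1:ℝ)) i = if i = j then (1:ℝ) else 0 := by
        simp [EuclideanSpace.single_apply]
      simp only [PiLp.add_apply, PiLp.smul_apply, smul_eq_mul]
      rw [hcoord, hsymm z hz, ← my_hessMat_apply, hsingle]
      simp [Matrix.add_apply, Matrix.smul_apply, Matrix.one_apply, smul_eq_mul]
    have hdet2 : (A z).det = (hessMat v z + ε • 1).det := by
      show LinearMap.det ((A z) : Euc n →ₗ[ℝ] Euc n) = _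
      rw [← LinearMap.det_toMatrix b, hmat]
    rw [hdet2]
    exact le_trans (my_det_le_det_add_smul_one (hPSD z hz) hε.le) (le_abs_self _)
  -- image bound
  have himg : g '' Om ⊆ closedBall (0 : Euc n) (L + ε * R) := by
    rintro w ⟨z, hz, rfl⟩
    rw [mem_closedBall_zero_iff]
    have h1 : ‖g z‖ ≤ ‖φ (fderiv ℝ v z)‖ + ‖ε • z‖ := norm_add_le _ _
    have h2 : ‖φ (fderiv ℝ v z)‖ = ‖fderiv ℝ v z‖ := φ.norm_map _
    have h3 : ‖fderiv ℝ v z‖ ≤ L := by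
      have := (hdiff z hz).hasFDerivAt.le_of_lipschitzOn (hOopen.mem_nhds hz) hlipOn
      rwa [Real.coe_toNNReal _ hL.le] at this
    have h4 : ‖ε • z‖ ≤ ε * R := by
      rw [norm_smul, Real.norm_eq_abs, abs_of_pos hε]
      exact mul_le_mul_of_nonneg_left
        (by simpa [mem_closedBall_zero_iff] using hOR hz) hε.le
    calc ‖g z‖ ≤ ‖fderiv ℝ v z‖ + ‖ε • z‖ := by rw [← h2]; exact h1
      _ ≤ L + ε * R := add_le_add h3 h4
  -- putting it together
  calc ∫⁻ z in Om, ENNReal.ofReal (hessDet v z)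
      ≤ ∫⁻ z in Om, ENNReal.ofReal |(A z).det| := by
        apply lintegral_mono_ae
        rw [ae_restrict_iff' hOmeas]
        exact ae_of_all _ fun z hz => ENNReal.ofReal_le_ofReal (hdet z hz)
    _ ≤ volume (g '' Om) :=
        lintegral_abs_det_fderiv_le_addHaar_image volume hOmeas
          (fun z hz => (hgder z hz).hasFDerivWithinAt) hinj
    _ ≤ volume (closedBall (0 : Euc n) (L + ε * R)) := measure_mono himg

lemma my_hessDet_contOn {n : ℕ} {Om : Set (Euc n)} (hOopen : IsOpen Om)
    {v : Euc n → ℝ} (hC2 : ContDiffOn ℝ 2 v Om) :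
    ContinuousOn (fun z => hessDet v z) Om := by
  have hB1 : ContDiffOn ℝ 1 (fderiv ℝ v) Om := hC2.fderiv_of_isOpen hOopen (by norm_num)
  have hBcont : ContinuousOn (fderiv ℝ (fderiv ℝ v)) Om :=
    hB1.continuousOn_fderiv_of_isOpen hOopen le_rfl
  have hMat : ContinuousOn (fun z => hessMat v z) Om := by
    apply continuousOn_pi.2
    intro i
    apply continuousOn_pi.2
    intro j
    have : ContinuousOn (fun z => fderiv ℝ (fderiv ℝ v) z
        (EuclideanSpace.single i 1) (EuclideanSpace.single j 1)) Om :=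
      (hBcont.clm_apply continuousOn_const).clm_apply continuousOn_const
    simpa [my_hessMat_apply] using this
  exact (Continuous.matrix_det continuous_id).comp_continuousOn hMat


end AuxLemmas

/-- finiteness (with explicit bound) of the integral
`∫_Ω (det D²v)^{p/(n+2p)}` for a Lipschitz convex `C²` function on an open
bounded convex set, via Jensen's inequality and the gradient image bound. -/
theorem hessian_power_integral_bound (n : ℕ) (hn : 1 ≤ n) (p : ℝ) (hp : 0 < p)
    (Om : Set (Euc n)) (hOopen : IsOpen Om) (hObd : Bornology.IsBounded Om)
    (hOconv : Convex ℝ Om)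
    (v : Euc n → ℝ) (hvconv : ConvexOn ℝ Om v) (hC2 : ContDiffOn ℝ 2 v Om)
    (L : ℝ) (hL : 0 < L)
    (hlip : ∀ x ∈ Om, ∀ y ∈ Om, |v x - v y| ≤ L * ‖x - y‖) :
    ∫ x in Om, (hessDet v x) ^ (p / ((n : ℝ) + 2 * p)) ≤
      (volume Om).toReal ^ (((n : ℝ) + p) / ((n : ℝ) + 2 * p)) *
        ((volume (Metric.ball (0 : Euc n) 1)).toReal * L ^ n) ^ (p / ((n : ℝ) + 2 * p)) := by
  classical
  have hOmeas : MeasurableSet Om := hOopen.measurableSet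
  have hn' : (0:ℝ) < (n:ℝ) := by exact_mod_cast Nat.pos_of_ne_zero (by omega)
  have hden : (0:ℝ) < (n:ℝ) + 2 * p := by linarith
  set q : ℝ := p / ((n:ℝ) + 2 * p) with hq
  have hq0 : 0 < q := div_pos hp hden
  have hq1 : q < 1 := by
    rw [hq, div_lt_one hden]; linarith
  have hexp1 : ((n:ℝ) + p) / ((n:ℝ) + 2 * p) = 1 - q := by
    rw [hq]; field_simp; ring
  -- nonnegativity of hessDet on Om
  have hdet0 : ∀ z ∈ Om, 0 ≤ hessDet v z := fun z hz =>
    my_psd_det_nonneg (my_hessMat_psd hOopen hvconv hC2 hz)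
  -- Lipschitz
  have hlipOn : LipschitzOnWith (Real.toNNReal L) v Om := by
    rw [lipschitzOnWith_iff_dist_le_mul]
    intro x hx y hy
    rw [Real.coe_toNNReal _ hL.le, Real.dist_eq, dist_eq_norm]
    exact hlip x hx y hy
  -- bounding radius
  obtain ⟨R0, hR0⟩ := (Metric.isBounded_iff_subset_closedBall (0:Euc n)).mp hObd
  set R : ℝ := max R0 0 with hR
  have hRnn : 0 ≤ R := le_max_right _ _
  have hOR : Om ⊆ closedBall (0:Euc n) R :=
    hR0.trans (closedBall_subset_closedBall (le_max_left _ _))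
  set vb : ℝ≥0∞ := volume (Metric.ball (0 : Euc n) 1) with hvb
  have hvbne : vb ≠ ⊤ := measure_ball_lt_top.ne
  -- the gradient-image bound with ε → 0
  set K : ℝ≥0∞ := ∫⁻ z in Om, ENNReal.ofReal (hessDet v z) with hK
  have hKb : K ≤ ENNReal.ofReal (L ^ n) * vb := by
    have hev : ∀ᶠ ε in 𝓝[>] (0:ℝ),
        K ≤ ENNReal.ofReal ((L + ε * R) ^ n) * vb := by
      refine eventually_nhdsWithin_of_forall (fun ε hε => ?_)
      have hε' : (0:ℝ) < ε := hε
      have h1 := my_lintegral_hessDet_le hOopen hvconv hC2 hL hlipOn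
        hε' hRnn hOR
      have h2 : volume (closedBall (0 : Euc n) (L + ε * R))
          = ENNReal.ofReal ((L + ε * R) ^ n) * vb := by
        rw [Measure.addHaar_closedBall volume (0:Euc n)
          (by positivity : (0:ℝ) ≤ L + ε * R)]
        congr 2
        simp [finrank_euclideanSpace]
      rw [← h2]; exact h1
    have htend : Tendsto (fun ε : ℝ => ENNReal.ofReal ((L + ε * R) ^ n) * vb)
        (𝓝[>] (0:ℝ)) (𝓝 (ENNReal.ofReal (L ^ n) * vb)) := by
      have hreal : Tendsto (fun ε : ℝ => (L + ε * R) ^ n) (𝓝 0) (𝓝 (L ^ n)) := by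
        have : Continuous (fun ε : ℝ => (L + ε * R) ^ n) := by continuity
        have h := this.tendsto 0
        simpa using h
      have h1 : Tendsto (fun ε : ℝ => ENNReal.ofReal ((L + ε * R) ^ n))
          (𝓝 0) (𝓝 (ENNReal.ofReal (L ^ n))) :=
        (ENNReal.continuous_ofReal.tendsto _).comp hreal
      exact (ENNReal.Tendsto.mul_const (h1.mono_left nhdsWithin_le_nhds)
        (Or.inr hvbne))
    exact ge_of_tendsto htend hev
  -- measurability
  have hcont : ContinuousOn (fun z => hessDet v z) Om := my_hessDet_contOn hOopen hC2
  have hFmeas : AEMeasurable (fun z => ENNReal.ofReal (hessDet v z))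
      (volume.restrict Om) :=
    (ENNReal.measurable_ofReal.comp_aemeasurable (hcont.aemeasurable hOmeas))
  -- Hölder
  set F : Euc n → ℝ≥0∞ := fun z => ENNReal.ofReal (hessDet v z) with hF
  have hconj : (1/q).HolderConjugate (1/(1-q)) := by
    rw [Real.holderConjugate_iff]
    constructor
    · rw [lt_div_iff₀ hq0]; linarith
    · simp only [one_div, inv_inv]; ring
  have hHolder : ∫⁻ z in Om, (F z) ^ q ≤ K ^ q * (volume Om) ^ (1 - q) := by
    have h := ENNReal.lintegral_mul_le_Lp_mul_Lq (volume.restrict Om) hconj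
      (f := fun z => (F z) ^ q) (g := fun _ => 1)
      (hFmeas.pow_const q) aemeasurable_const
    simp only [Pi.mul_apply, mul_one, ENNReal.one_rpow, one_div_one_div] at h
    have e1 : ∫⁻ a in Om, ((F a) ^ q) ^ (1/q) = ∫⁻ a in Om, F a :=
      lintegral_congr fun a => by
        rw [one_div, ← ENNReal.rpow_mul, mul_inv_cancel₀ hq0.ne', ENNReal.rpow_one]
    rw [e1] at h
    simpa using h
  have hbound : ∫⁻ z in Om, (F z) ^ q ≤
      (ENNReal.ofReal ((volume (Metric.ball (0 : Euc n) 1)).toReal * L ^ n)) ^ q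
        * (volume Om) ^ (1 - q) := by
    refine le_trans hHolder (mul_le_mul_left ?_ _)
    refine ENNReal.rpow_le_rpow ?_ hq0.le
    rw [ENNReal.ofReal_mul ENNReal.toReal_nonneg, ENNReal.ofReal_toReal hvbne,
      mul_comm]
    exact hKb
  -- convert to a real inequality
  have hOmvol : volume Om ≠ ⊤ := hObd.measure_lt_top.ne
  have hLHS : ∫ x in Om, (hessDet v x) ^ q
      = (∫⁻ z in Om, (F z) ^ q).toReal := by
    rw [integral_eq_lintegral_of_nonneg_ae]
    · congr 1
      refine lintegral_congr_ae ?_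
      refine (ae_restrict_mem hOmeas).mono fun z hz => ?_
      show ENNReal.ofReal (hessDet v z ^ q) = (ENNReal.ofReal (hessDet v z)) ^ q
      rw [ENNReal.ofReal_rpow_of_nonneg (hdet0 z hz) hq0.le]
    · refine (ae_restrict_mem hOmeas).mono fun z hz => ?_
      exact Real.rpow_nonneg (hdet0 z hz) q
    · exact ((hcont.rpow_const (fun z hz => Or.inr hq0.le)).aestronglyMeasurable hOmeas)
  rw [hLHS, hexp1]
  set C : ℝ := (volume (Metric.ball (0 : Euc n) 1)).toReal * L ^ n with hC
  have hCnn : 0 ≤ C := mul_nonneg ENNReal.toReal_nonneg (by positivity)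
  have hJne : (ENNReal.ofReal C) ^ q * (volume Om) ^ (1 - q) ≠ ⊤ := by
    apply ENNReal.mul_ne_top
    · exact ENNReal.rpow_ne_top_of_nonneg hq0.le ENNReal.ofReal_ne_top
    · exact ENNReal.rpow_ne_top_of_nonneg (by linarith) hOmvol
  calc (∫⁻ z in Om, (F z) ^ q).toReal
      ≤ ((ENNReal.ofReal C) ^ q * (volume Om) ^ (1 - q)).toReal :=
        ENNReal.toReal_mono hJne hbound
    _ = (volume Om).toReal ^ (1 - q) * C ^ q := by
        rw [ENNReal.toReal_mul, ← ENNReal.toReal_rpow, ← ENNReal.toReal_rpow,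
          ENNReal.toReal_ofReal hCnn, mul_comm]
    _ = (volume Om).toReal ^ (1 - q) * C ^ q := rfl
end
end

section
/- Let X ⊂ ℝⁿ be a compact convex set with nonempty interior, let v ∈ F(X), and let J be a compact subset of the interior of X. Then for every ε > 0 there exists η > 0 such that for every affine function ψ : ℝⁿ → ℝ with ψ(x) ≤ v(x) for all x ∈ X, any two points x₁, x₂ ∈ J satisfying v(x₁) − ψ(x₁) ≤ η and v(x₂) − ψ(x₂) ≤ η obey ‖x₁ − x₂‖ ≤ ε. -/
open MeasureTheory Filter Metric Set
open scoped RealInnerProductSpace Topology NNReal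

noncomputable section

section Aux

lemma sum_single_eq {n : ℕ} (d : Euc n) :
    (∑ i, d i • EuclideanSpace.single i (1:ℝ)) = d := by
  have := (EuclideanSpace.basisFun (Fin n) ℝ).sum_repr d
  simpa [EuclideanSpace.basisFun_apply, EuclideanSpace.basisFun_repr] using this

lemma clm_apply_eq {n : ℕ} (L : Euc n →L[ℝ] ℝ) (d : Euc n) :
    L d = ∑ j, L (EuclideanSpace.single j 1) * d j := by
  conv_lhs => rw [← sum_single_eq d]
  rw [map_sum]
  refine Finset.sum_congr rfl fun j _ => ?_
  rw [_root_.map_smul]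
  simp [mul_comm]

lemma quad_expand {n : ℕ} (H : Euc n →L[ℝ] (Euc n →L[ℝ] ℝ)) (d : Euc n) :
    H d d = ∑ i, d i * ∑ j, (H (EuclideanSpace.single i 1) (EuclideanSpace.single j 1)) * d j := by
  have h1 : H d = ∑ i, d i • H (EuclideanSpace.single i 1) := by
    conv_lhs => rw [← sum_single_eq d]
    rw [map_sum]
    exact Finset.sum_congr rfl fun i _ => by rw [_root_.map_smul]
  rw [h1]
  rw [ContinuousLinearMap.sum_apply]
  refine Finset.sum_congr rfl fun i _ => ?_
  rw [ContinuousLinearMap.smul_apply, smul_eq_mul, clm_apply_eq]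

lemma posQuad {n : ℕ} (v : Euc n → ℝ) (x : Euc n) (hx : (hessMat v x).PosDef)
    (d : Euc n) (hd : d ≠ 0) : 0 < fderiv ℝ (fderiv ℝ v) x d d := by
  have hd' : WithLp.ofLp d ≠ 0 := by
    intro h; apply hd; ext i; simpa using congrFun h i
  have h2 := hx.dotProduct_mulVec_pos hd'
  rw [star_trivial] at h2
  rw [quad_expand]
  refine h2.trans_eq (Eq.symm ?_)
  simp only [dotProduct, Matrix.mulVec, hessMat, Matrix.of_apply,
    iteratedFDeriv_two_apply, Matrix.cons_val_zero, Matrix.cons_val_one, Matrix.head_cons,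
    dotProduct]

lemma strict_mid {n : ℕ} {U : Set (Euc n)} (hU : IsOpen U) (hUc : Convex ℝ U)
    (v : Euc n → ℝ) (hcd : ContDiffOn ℝ 2 v U)
    (hpd : ∀ x ∈ U, (hessMat v x).PosDef)
    {a b : Euc n} (ha : a ∈ U) (hb : b ∈ U) (hab : a ≠ b) :
    v (midpoint ℝ a b) < (v a + v b) / 2 := by
  set d := b - a with hdd
  have hd0 : d ≠ 0 := sub_ne_zero.mpr (Ne.symm hab)
  set c : ℝ → Euc n := fun t => a + t • d with hc
  have hcont_c : Continuous c := by fun_prop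
  have hcderiv : ∀ t : ℝ, HasDerivAt c d t := by
    intro t
    have h1 : HasDerivAt (fun t : ℝ => t • d) d t := by
      simpa using (hasDerivAt_id t).smul_const d
    have := h1.const_add a; exact this
  have hmem : ∀ t ∈ Icc (0:ℝ) 1, c t ∈ U := fun t ht =>
    hUc.add_smul_sub_mem ha hb ht
  have hdv : ∀ x ∈ U, HasFDerivAt v (fderiv ℝ v x) x := fun x hx =>
    ((hcd.differentiableOn two_ne_zero x hx).differentiableAt (hU.mem_nhds hx)).hasFDerivAt
  have hdf1 : ContDiffOn ℝ 1 (fderiv ℝ v) U := hcd.fderiv_of_isOpen hU le_rfl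
  have hdv2 : ∀ x ∈ U, HasFDerivAt (fderiv ℝ v) (fderiv ℝ (fderiv ℝ v) x) x := fun x hx =>
    ((hdf1.differentiableOn one_ne_zero x hx).differentiableAt (hU.mem_nhds hx)).hasFDerivAt
  set g : ℝ → ℝ := fun t => v (c t) with hg
  set g1 : ℝ → ℝ := fun t => fderiv ℝ v (c t) d with hg1
  have hgd : ∀ t : ℝ, c t ∈ U → HasDerivAt g (g1 t) t := fun t ht =>
    (hdv _ ht).comp_hasDerivAt t (hcderiv t)
  have hg1d : ∀ t : ℝ, c t ∈ U → HasDerivAt g1 (fderiv ℝ (fderiv ℝ v) (c t) d d) t := by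
    intro t ht
    have h2 : HasDerivAt (fun t => fderiv ℝ v (c t)) (fderiv ℝ (fderiv ℝ v) (c t) d) t :=
      (hdv2 _ ht).comp_hasDerivAt t (hcderiv t)
    simpa using h2.clm_apply (hasDerivAt_const t d)
  set T : Set ℝ := c ⁻¹' U with hT
  have hTopen : IsOpen T := hU.preimage hcont_c
  have hderiv_eq : ∀ t ∈ T, deriv g t = g1 t := fun t ht => (hgd t ht).deriv
  have hsc : StrictConvexOn ℝ (Icc (0:ℝ) 1) g := by
    refine strictConvexOn_of_deriv2_pos (convex_Icc 0 1)
      (hcd.continuousOn.comp hcont_c.continuousOn hmem) (fun t ht => ?_)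
    rw [interior_Icc] at ht
    have htT : t ∈ T := hmem t (Ioo_subset_Icc_self ht)
    have heq : deriv g =ᶠ[𝓝 t] g1 :=
      Filter.eventually_of_mem (hTopen.mem_nhds htT) hderiv_eq
    have h22 : deriv^[2] g t = deriv (deriv g) t := rfl
    rw [h22, heq.deriv_eq, (hg1d t htT).deriv]
    exact posQuad v (c t) (hpd _ htT) d hd0
  have key := hsc.2 (left_mem_Icc.mpr zero_le_one) (right_mem_Icc.mpr zero_le_one)
    (by norm_num : (0:ℝ) ≠ 1) (by norm_num : (0:ℝ) < 1/2) (by norm_num : (0:ℝ) < 1/2)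
    (by norm_num)
  have hmid : midpoint ℝ a b = c (1/2 : ℝ) := by
    rw [midpoint_eq_smul_add, invOf_eq_inv]
    show _ = a + (1/2 : ℝ) • (b - a)
    module
  have hg0 : g 0 = v a := by simp [hg, hc]
  have hgone : g 1 = v b := by simp [hg, hc, hdd]
  have hghalf : g ((1/2:ℝ) • 0 + (1/2:ℝ) • 1) = v (midpoint ℝ a b) := by
    rw [hmid]; norm_num; rfl
  rw [hghalf, hg0, hgone] at key
  simp only [smul_eq_mul] at key
  linarith

lemma mid2_continuous {n : ℕ} :
    Continuous (fun p : Euc n × Euc n => midpoint ℝ p.1 p.2) := by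
  have heq : (fun p : Euc n × Euc n => midpoint ℝ p.1 p.2)
      = fun p : Euc n × Euc n => (2⁻¹ : ℝ) • (p.1 + p.2) := by
    funext p
    rw [midpoint_eq_smul_add, invOf_eq_inv]
  rw [heq]
  fun_prop

end Aux

/-- points of a compact subset of the interior where a circumscribed
affine function is `η`-close to `v` are `ε`-close to each other. -/
theorem shrinking_pieces (n : ℕ) (X : Set (Euc n)) (hXc : IsCompact X)
    (hXconv : Convex ℝ X) (hXint : (interior X).Nonempty)
    (v : Euc n → ℝ) (hv : MemF X v)
    (J : Set (Euc n)) (hJc : IsCompact J) (hJX : J ⊆ interior X) :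
    ∀ ε : ℝ, 0 < ε → ∃ η : ℝ, 0 < η ∧
      ∀ ψ : Euc n →ᵃ[ℝ] ℝ, (∀ x ∈ X, ψ x ≤ v x) →
        ∀ x₁ ∈ J, ∀ x₂ ∈ J,
          v x₁ - ψ x₁ ≤ η → v x₂ - ψ x₂ ≤ η → ‖x₁ - x₂‖ ≤ ε := by
  intro ε hε
  obtain ⟨hconv, ⟨L, hlip⟩, hcd, hpd⟩ := hv
  set U := interior X with hU
  have hUopen : IsOpen U := isOpen_interior
  have hUconv : Convex ℝ U := hXconv.interior
  have hvc : ContinuousOn v U := hcd.continuousOn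
  set φ : Euc n × Euc n → ℝ :=
    fun p => (v p.1 + v p.2) / 2 - v (midpoint ℝ p.1 p.2) with hφ
  set K := (J ×ˢ J) ∩ {p : Euc n × Euc n | ε ≤ ‖p.1 - p.2‖} with hKdef
  have hKc : IsCompact K :=
    (hJc.prod hJc).inter_right (isClosed_le continuous_const (by fun_prop))
  have hmidU : ∀ p : Euc n × Euc n, p.1 ∈ J → p.2 ∈ J → midpoint ℝ p.1 p.2 ∈ U :=
    fun p h1 h2 =>
      hUconv.segment_subset (hJX h1) (hJX h2) (midpoint_mem_segment _ _)
  rcases K.eq_empty_or_nonempty with hK | hK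
  · refine ⟨1, one_pos, fun ψ hψ x₁ h₁ x₂ h₂ _ _ => ?_⟩
    by_contra h
    have hmemK : (x₁, x₂) ∈ K := ⟨⟨h₁, h₂⟩, (lt_of_not_ge h).le⟩
    rw [hK] at hmemK
    exact hmemK
  · have hφc : ContinuousOn φ K := by
      have hKJJ : K ⊆ J ×ˢ J := inter_subset_left
      have c1 : ContinuousOn (fun p : Euc n × Euc n => v p.1) K :=
        hvc.comp continuousOn_fst (fun p hp => hJX (hKJJ hp).1)
      have c2 : ContinuousOn (fun p : Euc n × Euc n => v p.2) K :=
        hvc.comp continuousOn_snd (fun p hp => hJX (hKJJ hp).2)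
      have c3 : ContinuousOn (fun p : Euc n × Euc n => v (midpoint ℝ p.1 p.2)) K :=
        hvc.comp mid2_continuous.continuousOn
          (fun p hp => hmidU p (hKJJ hp).1 (hKJJ hp).2)
      exact ((c1.add c2).div_const 2).sub c3
    obtain ⟨p₀, hp₀K, hp₀min⟩ := hKc.exists_isMinOn hK hφc
    have hp₀J : p₀.1 ∈ J ∧ p₀.2 ∈ J := ⟨hp₀K.1.1, hp₀K.1.2⟩
    have hne : p₀.1 ≠ p₀.2 := by
      intro hcontra
      have : ε ≤ ‖p₀.1 - p₀.2‖ := hp₀K.2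
      rw [hcontra, sub_self, norm_zero] at this
      linarith
    have hc0 : 0 < φ p₀ := by
      have := strict_mid hUopen hUconv v hcd hpd (hJX hp₀J.1) (hJX hp₀J.2) hne
      simp only [hφ]
      linarith
    refine ⟨φ p₀ / 2, half_pos hc0, fun ψ hψ x₁ h₁ x₂ h₂ hη₁ hη₂ => ?_⟩
    by_contra h
    have hmemK : (x₁, x₂) ∈ K := ⟨⟨h₁, h₂⟩, (lt_of_not_ge h).le⟩
    have hmin : φ p₀ ≤ φ (x₁, x₂) := (isMinOn_iff.mp hp₀min) _ hmemK
    set m := midpoint ℝ x₁ x₂ with hm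
    have hmU : m ∈ U := hmidU (x₁, x₂) h₁ h₂
    have hmX : m ∈ X := interior_subset hmU
    have hψm : ψ m = (ψ x₁ + ψ x₂) / 2 := by
      rw [hm, AffineMap.map_midpoint, midpoint_eq_smul_add, invOf_eq_inv, smul_eq_mul]
      ring
    have h1v : ψ m ≤ v m := hψ m hmX
    have h2v : φ (x₁, x₂) = (v x₁ + v x₂) / 2 - v m := rfl
    rw [h2v] at hmin
    clear_value φ m U
    linarith
end
end

section
/- Let n ≥ 1 and p > 0, let X ⊂ ℝⁿ be a compact convex set with nonempty interior, let v : X → ℝ be convex and continuous, let ω : ℝ^{n+1} → ℝ be continuous and positive, and let m ≥ 1. Then the infimum inf { ∫_X (v(x) − l(x))^p ω(x, v(x)) dx : l ∈ P^c_(m)(v) } is attained: there exists l* ∈ P^c_(m)(v) with ∫_X (v(x) − l*(x))^p ω(x, v(x)) dx equal to this infimum. -/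
open MeasureTheory Filter Metric Set
open scoped RealInnerProductSpace Topology NNReal

noncomputable section

/-! ### Auxiliary material for the proof of `approx_inf_attained` -/

open scoped ENNReal

/-- An affine hyperplane `{x | ⟪u, x⟫ + c = 0}` with `u ≠ 0` is Lebesgue-null. -/
theorem hyperplane_null {n : ℕ} (u : Euc n) (hu : u ≠ 0) (c : ℝ) :
    volume {x : Euc n | ⟪u, x⟫ + c = 0} = 0 := by
  set f : Euc n →ₗ[ℝ] ℝ := (innerSL ℝ u).toLinearMap with hf
  have hfapp : ∀ x, f x = ⟪u, x⟫ := fun x => rfl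
  set x0 : Euc n := (-c / (‖u‖ ^ 2)) • u with hx0
  have hnu : ‖u‖ ^ 2 ≠ 0 := pow_ne_zero _ (norm_ne_zero_iff.2 hu)
  have hix0 : ⟪u, x0⟫ = -c := by
    rw [hx0, real_inner_smul_right, real_inner_self_eq_norm_sq]
    field_simp
  set s : AffineSubspace ℝ (Euc n) := AffineSubspace.mk' x0 (LinearMap.ker f) with hs
  have hset : {x : Euc n | ⟪u, x⟫ + c = 0} = (s : Set (Euc n)) := by
    ext x
    simp only [Set.mem_setOf_eq, hs, SetLike.mem_coe, AffineSubspace.mem_mk',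
      LinearMap.mem_ker, vsub_eq_sub, hfapp, inner_sub_right, hix0]
    constructor
    · intro h; linarith
    · intro h; linarith
  rw [hset]
  apply Measure.addHaar_affineSubspace
  intro htop
  have hdir : LinearMap.ker f = ⊤ := by
    have := AffineSubspace.direction_mk' x0 (LinearMap.ker f)
    rw [← hs, htop, AffineSubspace.direction_top] at this
    exact this.symm
  have : f u = 0 := by rw [LinearMap.ker_eq_top] at hdir; rw [hdir]; rfl
  rw [hfapp, real_inner_self_eq_norm_sq] at this
  exact hnu this

namespace ApproxAux

variable {n : ℕ}

/-- the affine function determined by a (slope, intercept) pair -/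
def piece (q : Euc n × ℝ) (x : Euc n) : ℝ := ⟪q.1, x⟫ + q.2

lemma piece_continuous (q : Euc n × ℝ) : Continuous (piece q) :=
  (continuous_const.inner continuous_id).add continuous_const

/-- `piece q` as a bundled affine map -/
def pieceAff (q : Euc n × ℝ) : Euc n →ᵃ[ℝ] ℝ where
  toFun := piece q
  linear := (innerSL ℝ q.1).toLinearMap
  map_vadd' := by
    intro x y
    simp only [piece, ContinuousLinearMap.coe_coe, innerSL_apply_apply, vadd_eq_add, inner_add_right]
    ring

@[simp] lemma pieceAff_apply (q : Euc n × ℝ) (x : Euc n) : pieceAff q x = piece q x := rfl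

/-- every affine map into ℝ is a `piece` -/
lemma exists_piece_eq (f : Euc n →ᵃ[ℝ] ℝ) : ∃ q : Euc n × ℝ, ∀ x, f x = piece q x := by
  refine ⟨((InnerProductSpace.toDual ℝ (Euc n)).symm (LinearMap.toContinuousLinearMap f.linear),
    f 0), fun x => ?_⟩
  have h1 : f x = f.linear x + f 0 := by rw [AffineMap.decomp f]; simp
  rw [h1, piece]
  congr 1
  rw [InnerProductSpace.toDual_symm_apply]
  rfl

variable {m : ℕ} [NeZero m]

/-- pointwise max of m affine pieces -/
def pwmax (θ : Fin m → Euc n × ℝ) (x : Euc n) : ℝ :=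
  Finset.univ.sup' Finset.univ_nonempty (fun j => piece (θ j) x)

lemma pwmax_eq_ciSup (θ : Fin m → Euc n × ℝ) (x : Euc n) :
    pwmax θ x = ⨆ j, piece (θ j) x :=
  Finset.sup'_univ_eq_ciSup _

lemma pwmax_continuous (θ : Fin m → Euc n × ℝ) : Continuous (pwmax θ) :=
  Continuous.finset_sup'_apply _ (fun i _ => piece_continuous (θ i))

lemma le_pwmax (θ : Fin m → Euc n × ℝ) (j : Fin m) (x : Euc n) :
    piece (θ j) x ≤ pwmax θ x :=
  Finset.le_sup' (fun j => piece (θ j) x) (Finset.mem_univ j)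

lemma pwmax_le {θ : Fin m → Euc n × ℝ} {x : Euc n} {c : ℝ}
    (h : ∀ j, piece (θ j) x ≤ c) : pwmax θ x ≤ c :=
  Finset.sup'_le _ _ (fun j _ => h j)

lemma pwmax_mono {θ θ' : Fin m → Euc n × ℝ} {x : Euc n}
    (h : ∀ j, piece (θ j) x ≤ piece (θ' j) x) : pwmax θ x ≤ pwmax θ' x :=
  pwmax_le (fun j => (h j).trans (le_pwmax θ' j x))

lemma ciSup_comp_surj {ι κ : Type*} [Nonempty ι] [Nonempty κ] {h : κ → ι}
    (hs : Function.Surjective h) (g : ι → ℝ) : ⨆ j, g (h j) = ⨆ i, g i := by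
  have : Set.range (g ∘ h) = Set.range g := by
    rw [Set.range_comp, hs.range_eq, Set.image_univ]
  rw [iSup, iSup, ← this]
  rfl

/-- translation between `IsPAC` and the parametric form -/
lemma isPAC_iff_param {X : Set (Euc n)} {v : Euc n → ℝ} (hm : 0 < m) (l : Euc n → ℝ) :
    IsPAC m X v l ↔ ∃ θ : Fin m → Euc n × ℝ,
      (∀ x, l x = pwmax θ x) ∧ ∀ x ∈ X, pwmax θ x ≤ v x := by
  constructor
  · rintro ⟨k, hk0, hkm, ψ, hψ, hle⟩
    haveI : Nonempty (Fin k) := ⟨⟨0, hk0⟩⟩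
    choose q hq using fun j => exists_piece_eq (ψ j)
    set pad : Fin m → Fin k := fun j => if h : (j : ℕ) < k then ⟨j, h⟩ else ⟨0, hk0⟩ with hpad
    have hsurj : Function.Surjective pad := by
      intro i
      refine ⟨⟨i, lt_of_lt_of_le i.2 hkm⟩, ?_⟩
      simp [hpad, i.2]
    have key : ∀ x, l x = pwmax (fun j => q (pad j)) x := by
      intro x
      rw [hψ x, pwmax_eq_ciSup, ← ciSup_comp_surj hsurj (fun i => ψ i x)]
      exact congrArg iSup (funext fun j => hq (pad j) x)
    exact ⟨fun j => q (pad j), key, fun x hx => (key x) ▸ hle x hx⟩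
  · rintro ⟨θ, hl, hle⟩
    refine ⟨m, hm, le_refl m, fun j => pieceAff (θ j), fun x => ?_, fun x hx => ?_⟩
    · rw [hl x, pwmax_eq_ciSup]; rfl
    · rw [hl x]; exact hle x hx

variable {p : ℝ} {X : Set (Euc n)} {v : Euc n → ℝ} {ω : Euc n × ℝ → ℝ}

/-- the weighted approximation error of `l` -/
def err (p : ℝ) (X : Set (Euc n)) (v : Euc n → ℝ) (ω : Euc n × ℝ → ℝ) (l : Euc n → ℝ) : ℝ :=
  ∫ x in X, (v x - l x) ^ p * ω (x, v x)

lemma err_def (p : ℝ) (X : Set (Euc n)) (v : Euc n → ℝ) (ω : Euc n × ℝ → ℝ) (l : Euc n → ℝ) :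
    err p X v ω l = ∫ x in X, (v x - l x) ^ p * ω (x, v x) := rfl

lemma integrand_contOn (hp : 0 < p) (hv : ContinuousOn v X) {l : Euc n → ℝ}
    (hl : Continuous l) (hω : Continuous ω) :
    ContinuousOn (fun x => (v x - l x) ^ p * ω (x, v x)) X := by
  have h1 : ContinuousOn (fun x => v x - l x) X := hv.sub hl.continuousOn
  have h2 : ContinuousOn (fun x => (v x - l x) ^ p) X :=
    h1.rpow_const (fun x _ => Or.inr hp.le)
  have h3 : ContinuousOn (fun x => ω (x, v x)) X :=
    hω.comp_continuousOn (continuous_id.continuousOn.prodMk hv)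
  exact h2.mul h3

lemma integrand_integrable (hp : 0 < p) (hXc : IsCompact X) (hv : ContinuousOn v X)
    {l : Euc n → ℝ} (hl : Continuous l) (hω : Continuous ω) :
    IntegrableOn (fun x => (v x - l x) ^ p * ω (x, v x)) X volume :=
  (integrand_contOn hp hv hl hω).integrableOn_compact hXc

lemma err_nonneg (hXc : IsCompact X) (hωpos : ∀ z, 0 < ω z) {l : Euc n → ℝ}
    (hlv : ∀ x ∈ X, l x ≤ v x) : 0 ≤ err p X v ω l :=
  setIntegral_nonneg hXc.isClosed.measurableSet fun x hx =>
    mul_nonneg (Real.rpow_nonneg (sub_nonneg.2 (hlv x hx)) p) (hωpos _).le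

lemma err_mono (hp : 0 < p) (hXc : IsCompact X) (hv : ContinuousOn v X) (hω : Continuous ω)
    (hωpos : ∀ z, 0 < ω z) {l₁ l₂ : Euc n → ℝ} (hl₁ : Continuous l₁) (hl₂ : Continuous l₂)
    (h12 : ∀ x ∈ X, l₁ x ≤ l₂ x) (h2v : ∀ x ∈ X, l₂ x ≤ v x) :
    err p X v ω l₂ ≤ err p X v ω l₁ := by
  apply setIntegral_mono_on (integrand_integrable hp hXc hv hl₂ hω)
    (integrand_integrable hp hXc hv hl₁ hω) hXc.isClosed.measurableSet
  intro x hx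
  exact mul_le_mul_of_nonneg_right
    (Real.rpow_le_rpow (sub_nonneg.2 (h2v x hx)) (sub_le_sub_left (h12 x hx) _) hp.le)
    (hωpos _).le

/-- Normalization: lift every piece so that it touches the graph of `v`; this does not
increase the error and yields a linear-in-slope bound on intercepts. -/
lemma normalize (hp : 0 < p) (hXc : IsCompact X) (hXne : X.Nonempty)
    (hv : ContinuousOn v X) (hω : Continuous ω) (hωpos : ∀ z, 0 < ω z)
    {θ : Fin m → Euc n × ℝ} (hθ : ∀ x ∈ X, pwmax θ x ≤ v x)
    {K0 R : ℝ} (hvb : ∀ x ∈ X, |v x| ≤ K0) (hXR : X ⊆ closedBall 0 R) :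
    ∃ θ' : Fin m → Euc n × ℝ, (∀ x ∈ X, pwmax θ' x ≤ v x) ∧
      err p X v ω (pwmax θ') ≤ err p X v ω (pwmax θ) ∧
      ∀ j, |(θ' j).2| ≤ K0 + ‖(θ' j).1‖ * R := by
  have hgc : ∀ j : Fin m, ContinuousOn (fun x => v x - piece (θ j) x) X :=
    fun j => hv.sub (piece_continuous (θ j)).continuousOn
  choose x0 hx0X hx0min using fun j => hXc.exists_isMinOn hXne (hgc j)
  set c : Fin m → ℝ := fun j => v (x0 j) - piece (θ j) (x0 j) with hcdef
  have hcle : ∀ j, ∀ x ∈ X, c j ≤ v x - piece (θ j) x :=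
    fun j x hx => (isMinOn_iff.mp (hx0min j)) x hx
  have hc0 : ∀ j, 0 ≤ c j :=
    fun j => sub_nonneg.2 ((le_pwmax θ j (x0 j)).trans (hθ _ (hx0X j)))
  have hpid : ∀ j x, piece ((θ j).1, (θ j).2 + c j) x = piece (θ j) x + c j := by
    intro j x; simp only [piece]; ring
  have hA' : ∀ x ∈ X, pwmax (fun j => ((θ j).1, (θ j).2 + c j)) x ≤ v x := by
    intro x hx
    apply pwmax_le
    intro j
    rw [hpid j x]
    have := hcle j x hx
    linarith
  refine ⟨fun j => ((θ j).1, (θ j).2 + c j), hA', ?_, ?_⟩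
  · apply err_mono hp hXc hv hω hωpos (pwmax_continuous _) (pwmax_continuous _) _ hA'
    intro x _
    apply pwmax_mono
    intro j
    rw [hpid j x]
    linarith [hc0 j]
  · intro j
    have hb : (θ j).2 + c j = v (x0 j) - ⟪(θ j).1, x0 j⟫ := by
      rw [hcdef]; simp only [piece]; ring
    show |(θ j).2 + c j| ≤ _
    rw [hb]
    have h1 : |⟪(θ j).1, x0 j⟫| ≤ ‖(θ j).1‖ * ‖x0 j‖ := abs_real_inner_le_norm _ _
    have h2 : ‖x0 j‖ ≤ R := mem_closedBall_zero_iff.mp (hXR (hx0X j))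
    have h3 : |v (x0 j)| ≤ K0 := hvb _ (hx0X j)
    calc |v (x0 j) - ⟪(θ j).1, x0 j⟫| ≤ |v (x0 j)| + |⟪(θ j).1, x0 j⟫| := abs_sub _ _
    _ ≤ K0 + ‖(θ j).1‖ * R := by
        have := mul_le_mul_of_nonneg_left h2 (norm_nonneg (θ j).1)
        linarith

end ApproxAux

/-- the infimum defining the best weighted approximation by
circumscribed piecewise affine functions with at most `m` pieces is attained. -/
theorem approx_inf_attained (n : ℕ) (hn : 1 ≤ n) (p : ℝ) (hp : 0 < p)
    (X : Set (Euc n)) (hXc : IsCompact X) (hXconv : Convex ℝ X)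
    (hXint : (interior X).Nonempty)
    (v : Euc n → ℝ) (hvconv : ConvexOn ℝ X v) (hvcont : ContinuousOn v X)
    (ω : Euc n × ℝ → ℝ) (hω : Continuous ω) (hωpos : ∀ z, 0 < ω z)
    (m : ℕ) (hm : 1 ≤ m) :
    ∃ l : Euc n → ℝ, IsPAC m X v l ∧
      (∫ x in X, (v x - l x) ^ p * ω (x, v x)) = approxErr p m X v ω := by
  classical
  haveI hNZ : NeZero m := ⟨by omega⟩
  haveI : Nonempty (Fin m) := ⟨⟨0, by omega⟩⟩
  obtain ⟨xint, hxint⟩ := hXint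
  have hXne : X.Nonempty := ⟨xint, interior_subset hxint⟩
  obtain ⟨R, hXR⟩ := hXc.isBounded.subset_closedBall 0
  have hR0 : 0 ≤ R := by
    obtain ⟨x, hx⟩ := hXne
    exact le_trans (norm_nonneg x) (mem_closedBall_zero_iff.mp (hXR hx))
  obtain ⟨xmin, hxminX, hxmin⟩ := hXc.exists_isMinOn hXne hvcont
  obtain ⟨xmax, hxmaxX, hxmax⟩ := hXc.exists_isMaxOn hXne hvcont
  set μ0 : ℝ := v xmin with hμ0
  have hμle : ∀ x ∈ X, μ0 ≤ v x := isMinOn_iff.mp hxmin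
  have hMge : ∀ x ∈ X, v x ≤ v xmax := isMaxOn_iff.mp hxmax
  set K0 : ℝ := |μ0| + |v xmax| with hK0def
  have hK00 : 0 ≤ K0 := by positivity
  have hvb : ∀ x ∈ X, |v x| ≤ K0 := by
    intro x hx
    have h1 := hμle x hx
    have h2 := hMge x hx
    have h3 := neg_abs_le μ0
    have h4 := le_abs_self (v xmax)
    have h5 := abs_nonneg μ0
    have h6 := abs_nonneg (v xmax)
    rw [abs_le]
    constructor <;> [linarith; linarith]
  set S : Set ℝ :=
    {r | ∃ l, IsPAC m X v l ∧ r = ∫ x in X, (v x - l x) ^ p * ω (x, v x)} with hSdef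
  have happrox : approxErr p m X v ω = sInf S := by unfold approxErr; rw [hSdef]
  have hmemS : ∀ r : ℝ, r ∈ S ↔ ∃ θ : Fin m → Euc n × ℝ,
      (∀ x ∈ X, ApproxAux.pwmax θ x ≤ v x) ∧ ApproxAux.err p X v ω (ApproxAux.pwmax θ) = r := by
    intro r
    constructor
    · rintro ⟨l, hl, rfl⟩
      obtain ⟨θ, hlθ, hθv⟩ := (ApproxAux.isPAC_iff_param (by omega) l).1 hl
      have hfun : l = ApproxAux.pwmax θ := funext hlθ
      refine ⟨θ, hθv, ?_⟩
      rw [hfun, ApproxAux.err_def]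
    · rintro ⟨θ, hθv, rfl⟩
      exact ⟨ApproxAux.pwmax θ,
        (ApproxAux.isPAC_iff_param (by omega) _).2 ⟨θ, fun x => rfl, hθv⟩,
        (ApproxAux.err_def p X v ω _).symm ▸ rfl⟩
  -- S is nonempty and bounded below
  have hconst : ∀ x, ApproxAux.pwmax (fun _ : Fin m => ((0 : Euc n), μ0)) x = μ0 := by
    intro x
    have h1 : ∀ j : Fin m, ApproxAux.piece ((0 : Euc n), μ0) x = μ0 := by
      intro j; simp [ApproxAux.piece]
    refine le_antisymm (ApproxAux.pwmax_le fun j => le_of_eq (h1 j)) ?_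
    have h2 := ApproxAux.le_pwmax (fun _ : Fin m => ((0 : Euc n), μ0))
      ⟨0, Nat.pos_of_ne_zero (NeZero.ne m)⟩ x
    rw [h1 ⟨0, Nat.pos_of_ne_zero (NeZero.ne m)⟩] at h2
    exact h2
  have hSne : S.Nonempty := by
    refine ⟨_, (hmemS _).2 ⟨fun _ => ((0 : Euc n), μ0), fun x hx => ?_, rfl⟩⟩
    rw [hconst x]; exact hμle x hx
  have hS0 : ∀ r ∈ S, 0 ≤ r := by
    rintro r ⟨l, hl, rfl⟩
    obtain ⟨k, hk0, hkm, ψ, hψ, hlv⟩ := hl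
    have := ApproxAux.err_nonneg (p := p) (ω := ω) hXc hωpos hlv
    rwa [ApproxAux.err_def] at this
  have hSbdd : BddBelow S := ⟨0, fun r hr => hS0 r hr⟩
  -- minimizing sequence
  obtain ⟨r, -, hrtend, hrmem⟩ := exists_seq_tendsto_sInf hSne hSbdd
  choose θ hθA hθval using fun k => (hmemS (r k)).1 (hrmem k)
  -- normalization
  choose θ1 hθ1A hθ1le hθ1b using fun k =>
    ApproxAux.normalize hp hXc hXne hvcont hω hωpos (hθA k) hvb hXR
  have hθ1mem : ∀ k, ApproxAux.err p X v ω (ApproxAux.pwmax (θ1 k)) ∈ S :=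
    fun k => (hmemS _).2 ⟨θ1 k, hθ1A k, rfl⟩
  have hθ1tend : Tendsto (fun k => ApproxAux.err p X v ω (ApproxAux.pwmax (θ1 k)))
      atTop (𝓝 (sInf S)) :=
    tendsto_of_tendsto_of_tendsto_of_le_of_le tendsto_const_nhds hrtend
      (fun k => csInf_le hSbdd (hθ1mem k)) (fun k => (hθ1le k).trans_eq (hθval k))
  -- compactification of parameters
  set CB : ℝ := K0 + R with hCBdef
  set Φ : ℕ → Fin m → ℝ × Euc n × ℝ := fun k j =>
    ((1 + ‖(θ1 k j).1‖)⁻¹, (1 + ‖(θ1 k j).1‖)⁻¹ • (θ1 k j).1,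
      (1 + ‖(θ1 k j).1‖)⁻¹ * (θ1 k j).2) with hΦdef
  set Kc : Set (Fin m → ℝ × Euc n × ℝ) :=
    Set.univ.pi fun _ => Icc (0:ℝ) 1 ×ˢ (closedBall (0:Euc n) 1 ×ˢ Icc (-CB) CB) with hKcdef
  have hKcomp : IsCompact Kc :=
    isCompact_univ_pi fun _ => isCompact_Icc.prod ((isCompact_closedBall _ _).prod isCompact_Icc)
  have hbpos : ∀ k (j : Fin m), (0:ℝ) < 1 + ‖(θ1 k j).1‖ := fun k j => by positivity
  have hΦmem : ∀ k, Φ k ∈ Kc := by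
    intro k
    rw [hKcdef, Set.mem_univ_pi]
    intro j
    have hb := hbpos k j
    refine ⟨⟨inv_nonneg.2 hb.le, ?_⟩, ?_, ?_⟩
    · rw [inv_le_one_iff₀]
      right; linarith [norm_nonneg (θ1 k j).1]
    · rw [mem_closedBall_zero_iff, norm_smul, Real.norm_eq_abs, abs_of_pos (inv_pos.2 hb),
        inv_mul_le_iff₀ hb, mul_one]
      linarith [norm_nonneg (θ1 k j).1]
    · rw [mem_Icc, ← abs_le, abs_mul, abs_of_pos (inv_pos.2 hb), inv_mul_le_iff₀ hb]
      have h1 := hθ1b k j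
      have h2 := norm_nonneg (θ1 k j).1
      nlinarith
  obtain ⟨Λ, hΛmem, φ, hφmono, hφtend⟩ := hKcomp.tendsto_subseq hΦmem
  set θ2 : ℕ → Fin m → Euc n × ℝ := fun k => θ1 (φ k) with hθ2def
  have hθ2A : ∀ k, ∀ x ∈ X, ApproxAux.pwmax (θ2 k) x ≤ v x := fun k => hθ1A (φ k)
  set t : Fin m → ℝ := fun j => (Λ j).1 with htdef
  set u : Fin m → Euc n := fun j => (Λ j).2.1 with hudef
  set β : Fin m → ℝ := fun j => (Λ j).2.2 with hβdef
  have hcomp : ∀ j, Tendsto (fun k => Φ (φ k) j) atTop (𝓝 (Λ j)) :=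
    fun j => (tendsto_pi_nhds.1 hφtend) j
  have ht : ∀ j, Tendsto (fun k => (Φ (φ k) j).1) atTop (𝓝 (t j)) :=
    fun j => (continuous_fst.tendsto _).comp (hcomp j)
  have hu : ∀ j, Tendsto (fun k => (Φ (φ k) j).2.1) atTop (𝓝 (u j)) :=
    fun j => ((continuous_fst.comp continuous_snd).tendsto _).comp (hcomp j)
  have hβ : ∀ j, Tendsto (fun k => (Φ (φ k) j).2.2) atTop (𝓝 (β j)) :=
    fun j => ((continuous_snd.comp continuous_snd).tendsto _).comp (hcomp j)
  have hΛb : ∀ j : Fin m, Λ j ∈ Icc (0:ℝ) 1 ×ˢ (closedBall (0:Euc n) 1 ×ˢ Icc (-CB) CB) := by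
    intro j
    have := hΛmem
    rw [hKcdef, Set.mem_univ_pi] at this
    exact this j
  have ht01 : ∀ j, (0:ℝ) ≤ t j ∧ t j ≤ 1 := fun j => ⟨(hΛb j).1.1, (hΛb j).1.2⟩
  -- basic identities for Φ
  have hΦ1 : ∀ k (j : Fin m), (Φ (φ k) j).1 = (1 + ‖(θ2 k j).1‖)⁻¹ := fun k j => rfl
  have hΦ2 : ∀ k (j : Fin m), (Φ (φ k) j).2.1 = (1 + ‖(θ2 k j).1‖)⁻¹ • (θ2 k j).1 :=
    fun k j => rfl
  have hΦ3 : ∀ k (j : Fin m), (Φ (φ k) j).2.2 = (1 + ‖(θ2 k j).1‖)⁻¹ * (θ2 k j).2 :=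
    fun k j => rfl
  -- the limit parameters
  set q : Fin m → Euc n × ℝ := fun j =>
    if h : 0 < t j then ((t j)⁻¹ • u j, (t j)⁻¹ * β j) else ((0 : Euc n), μ0) with hqdef
  set lstar : Euc n → ℝ := ApproxAux.pwmax q with hlstardef
  -- convergence of pieces for "bounded" indices
  have hpc : ∀ j, 0 < t j → ∀ x : Euc n,
      Tendsto (fun k => ApproxAux.piece (θ2 k j) x) atTop (𝓝 (ApproxAux.piece (q j) x)) := by
    intro j hj x
    have hA : Tendsto (fun k => (θ2 k j).1) atTop (𝓝 ((t j)⁻¹ • u j)) := by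
      have h1 := Tendsto.smul ((ht j).inv₀ hj.ne') (hu j)
      apply h1.congr
      intro k
      rw [hΦ1, hΦ2, inv_inv, smul_smul, mul_inv_cancel₀ (hbpos (φ k) j).ne', one_smul]
    have hB : Tendsto (fun k => (θ2 k j).2) atTop (𝓝 ((t j)⁻¹ * β j)) := by
      have h1 := Tendsto.mul ((ht j).inv₀ hj.ne') (hβ j)
      apply h1.congr
      intro k
      rw [hΦ1, hΦ3, inv_inv, ← mul_assoc, mul_inv_cancel₀ (hbpos (φ k) j).ne', one_mul]
    have hfinal := (Tendsto.inner hA (tendsto_const_nhds (x := x))).add hB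
    have hqj : ApproxAux.piece (q j) x = ⟪(t j)⁻¹ • u j, x⟫ + (t j)⁻¹ * β j := by
      rw [hqdef]; simp only [ApproxAux.piece, dif_pos hj]
    rw [hqj]
    exact hfinal
  -- the limit function is admissible
  have hqA : ∀ x ∈ X, lstar x ≤ v x := by
    intro x hx
    apply ApproxAux.pwmax_le
    intro j
    by_cases hj : 0 < t j
    · refine le_of_tendsto (hpc j hj x) (Eventually.of_forall fun k => ?_)
      exact (ApproxAux.le_pwmax (θ2 k) j x).trans (hθ2A k x hx)
    · have hq0 : ApproxAux.piece (q j) x = μ0 := by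
        rw [hqdef]; simp [ApproxAux.piece, dif_neg hj]
      rw [hq0]; exact hμle x hx
  -- lower bound for lstar on X
  obtain ⟨xc, hxcX, hxcmin⟩ := hXc.exists_isMinOn hXne (ApproxAux.pwmax_continuous q).continuousOn
  set c : ℝ := lstar xc with hcdef
  have hclow : ∀ x ∈ X, c ≤ lstar x := isMinOn_iff.mp hxcmin
  -- facts for steep indices
  have ht0 : ∀ j, ¬ 0 < t j → t j = 0 := fun j hj => le_antisymm (not_lt.1 hj) (ht01 j).1
  have hinf : ∀ j, ¬ 0 < t j → Tendsto (fun k => ((Φ (φ k) j).1)⁻¹) atTop atTop := by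
    intro j hj
    apply Filter.Tendsto.inv_tendsto_nhdsGT_zero
    apply tendsto_nhdsWithin_of_tendsto_nhds_of_eventually_within
    · rw [← ht0 j hj]; exact ht j
    · exact Eventually.of_forall fun k => inv_pos.2 (hbpos (φ k) j)
  have hunorm : ∀ j, ¬ 0 < t j → ‖u j‖ = 1 := by
    intro j hj
    have h1 : Tendsto (fun k => ‖(Φ (φ k) j).2.1‖) atTop (𝓝 ‖u j‖) :=
      (continuous_norm.tendsto _).comp (hu j)
    have h2 : ∀ k, ‖(Φ (φ k) j).2.1‖ = 1 - (Φ (φ k) j).1 := by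
      intro k
      rw [hΦ2, hΦ1, norm_smul, Real.norm_eq_abs,
        abs_of_pos (inv_pos.2 (hbpos (φ k) j))]
      have hne := (hbpos (φ k) j).ne'
      field_simp
      simp only [hθ2def]
      ring
    have h3 : Tendsto (fun k => 1 - (Φ (φ k) j).1) atTop (𝓝 (1 - t j)) :=
      tendsto_const_nhds.sub (ht j)
    have h4 := tendsto_nhds_unique (h1.congr h2) h3
    rw [ht0 j hj, sub_zero] at h4
    exact h4
  set γ : Fin m → Euc n → ℝ := fun j x => ⟪u j, x⟫ + β j with hγdef
  have hγtend : ∀ (j : Fin m) (x : Euc n),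
      Tendsto (fun k => ⟪(Φ (φ k) j).2.1, x⟫ + (Φ (φ k) j).2.2) atTop (𝓝 (γ j x)) :=
    fun j x => (Tendsto.inner (hu j) (tendsto_const_nhds (x := x))).add (hβ j)
  have hfact : ∀ k (j : Fin m) (x : Euc n), ApproxAux.piece (θ2 k j) x =
      ((Φ (φ k) j).1)⁻¹ * (⟪(Φ (φ k) j).2.1, x⟫ + (Φ (φ k) j).2.2) := by
    intro k j x
    rw [hΦ1, hΦ2, hΦ3, inv_inv, real_inner_smul_left]
    have hne := (hbpos (φ k) j).ne'
    show ⟪(θ2 k j).1, x⟫ + (θ2 k j).2 = _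
    field_simp
  have hγle : ∀ j, ¬ 0 < t j → ∀ x ∈ X, γ j x ≤ 0 := by
    intro j hj x hx
    by_contra hpos
    push_neg at hpos
    have htop : Tendsto (fun k => ApproxAux.piece (θ2 k j) x) atTop atTop := by
      have h1 := Filter.Tendsto.atTop_mul_pos hpos (hinf j hj) (hγtend j x)
      exact h1.congr fun k => (hfact k j x).symm
    obtain ⟨k, hk⟩ := (htop.eventually_gt_atTop (v x)).exists
    exact absurd ((ApproxAux.le_pwmax (θ2 k) j x).trans (hθ2A k x hx)) (not_le.2 hk)
  have hsteep : ∀ j, ¬ 0 < t j → ∀ x ∈ X, γ j x ≠ 0 →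
      ∀ᶠ k in atTop, ApproxAux.piece (θ2 k j) x < c := by
    intro j hj x hx hne0
    have hneg : γ j x < 0 := lt_of_le_of_ne (hγle j hj x hx) hne0
    have hbot : Tendsto (fun k => ApproxAux.piece (θ2 k j) x) atTop atBot := by
      have h1 := Filter.Tendsto.atTop_mul_neg hneg (hinf j hj) (hγtend j x)
      exact h1.congr fun k => (hfact k j x).symm
    exact hbot.eventually_lt_atBot c
  -- the exceptional null set
  set N : Set (Euc n) := ⋃ j : Fin m, {x | ¬ 0 < t j ∧ γ j x = 0} with hNdef
  have hNnull : volume N = 0 := by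
    apply measure_iUnion_null
    intro j
    by_cases hj : 0 < t j
    · have he : {x : Euc n | ¬ 0 < t j ∧ γ j x = 0} = ∅ := by
        ext x; simp [hj]
      rw [he]; exact measure_empty
    · have he : {x : Euc n | ¬ 0 < t j ∧ γ j x = 0} = {x | ⟪u j, x⟫ + β j = 0} := by
        ext x; simp [hj, hγdef]
      rw [he]
      apply hyperplane_null
      intro h0
      have := hunorm j hj
      rw [h0, norm_zero] at this
      exact one_ne_zero this.symm
  -- key pointwise estimate
  have hkey : ∀ x ∈ X, x ∉ N → ∀ ε : ℝ, 0 < ε →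
      ∀ᶠ k in atTop, ApproxAux.pwmax (θ2 k) x ≤ lstar x + ε := by
    intro x hx hxN ε hε
    have hall : ∀ j : Fin m, ∀ᶠ k in atTop, ApproxAux.piece (θ2 k j) x ≤ lstar x + ε := by
      intro j
      by_cases hj : 0 < t j
      · have hlt : ApproxAux.piece (q j) x < lstar x + ε :=
          lt_of_le_of_lt (ApproxAux.le_pwmax q j x) (by linarith)
        exact ((hpc j hj x).eventually_lt_const hlt).mono fun k hk => hk.le
      · have hne0 : γ j x ≠ 0 := fun h0 => hxN (Set.mem_iUnion.2 ⟨j, hj, h0⟩)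
        refine (hsteep j hj x hx hne0).mono fun k hk => hk.le.trans ?_
        linarith [hclow x hx]
    exact (eventually_all.2 hall).mono fun k hk => ApproxAux.pwmax_le hk
  -- Fatou argument
  have hMX : MeasurableSet X := hXc.isClosed.measurableSet
  set fk : ℕ → Euc n → ℝ :=
    fun k x => (v x - ApproxAux.pwmax (θ2 k) x) ^ p * ω (x, v x) with hfkdef
  set fstar : Euc n → ℝ := fun x => (v x - lstar x) ^ p * ω (x, v x) with hfstardef
  have haeX : ∀ᵐ x ∂(volume.restrict X), x ∈ X := ae_restrict_mem hMX
  have haeN : ∀ᵐ x ∂(volume.restrict X), x ∉ N :=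
    (measure_eq_zero_iff_ae_notMem.mp hNnull).filter_mono (ae_mono Measure.restrict_le_self)
  have hliminf : ∀ᵐ x ∂(volume.restrict X),
      ENNReal.ofReal (fstar x) ≤ Filter.liminf (fun k => ENNReal.ofReal (fk k x)) atTop := by
    filter_upwards [haeX, haeN] with x hx hxN
    have hw : 0 ≤ ω (x, v x) := (hωpos _).le
    have hlev : lstar x ≤ v x := hqA x hx
    have hstep : ∀ ε : ℝ, 0 < ε →
        ENNReal.ofReal ((max (v x - lstar x - ε) 0) ^ p * ω (x, v x)) ≤
          Filter.liminf (fun k => ENNReal.ofReal (fk k x)) atTop := by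
      intro ε hε
      apply le_liminf_of_le (by isBoundedDefault)
      filter_upwards [hkey x hx hxN ε hε] with k hk
      apply ENNReal.ofReal_le_ofReal
      refine mul_le_mul_of_nonneg_right ?_ hw
      refine Real.rpow_le_rpow (le_max_right _ _) ?_ hp.le
      exact max_le (by linarith) (sub_nonneg.2 (hθ2A k x hx))
    set G : ℝ → ℝ≥0∞ :=
      fun s => ENNReal.ofReal ((max (v x - lstar x - s) 0) ^ p * ω (x, v x)) with hGdef
    have hGcont : ContinuousAt G 0 := by
      apply ENNReal.continuous_ofReal.continuousAt.comp
      apply ContinuousAt.mul _ continuousAt_const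
      exact (Real.continuousAt_rpow_const _ _ (Or.inr hp.le)).comp
        (((continuous_const.sub continuous_id).max continuous_const).continuousAt)
    have hG0 : G 0 = ENNReal.ofReal (fstar x) := by
      rw [hGdef]
      simp only [sub_zero]
      rw [max_eq_left (sub_nonneg.2 hlev)]
    have htG : Tendsto (fun i : ℕ => G (1 / ((i : ℝ) + 1))) atTop (𝓝 (ENNReal.ofReal (fstar x))) := by
      rw [← hG0]
      exact hGcont.tendsto.comp tendsto_one_div_add_atTop_nhds_zero_nat
    refine le_of_tendsto htG (Eventually.of_forall fun i => ?_)
    exact hstep _ (by positivity)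
  have hfkcont : ∀ k, ContinuousOn (fk k) X := fun k =>
    ApproxAux.integrand_contOn hp hvcont (ApproxAux.pwmax_continuous _) hω
  have hfkmeas : ∀ k, AEMeasurable (fun x => ENNReal.ofReal (fk k x)) (volume.restrict X) :=
    fun k => ENNReal.measurable_ofReal.comp_aemeasurable ((hfkcont k).aemeasurable hMX)
  have hchain : (∫⁻ x in X, ENNReal.ofReal (fstar x)) ≤
      Filter.liminf (fun k => ∫⁻ x in X, ENNReal.ofReal (fk k x)) atTop :=
    le_trans (lintegral_mono_ae hliminf) (lintegral_liminf_le' hfkmeas)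
  have hid : ∀ k, (∫⁻ x in X, ENNReal.ofReal (fk k x)) =
      ENNReal.ofReal (ApproxAux.err p X v ω (ApproxAux.pwmax (θ2 k))) := by
    intro k
    rw [ApproxAux.err_def, ← ofReal_integral_eq_lintegral_ofReal]
    · exact ApproxAux.integrand_integrable hp hXc hvcont (ApproxAux.pwmax_continuous _) hω
    · filter_upwards [haeX] with x hx
      exact mul_nonneg (Real.rpow_nonneg (sub_nonneg.2 (hθ2A k x hx)) p) (hωpos _).le
  have hidstar : (∫⁻ x in X, ENNReal.ofReal (fstar x)) =
      ENNReal.ofReal (ApproxAux.err p X v ω lstar) := by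
    rw [ApproxAux.err_def, ← ofReal_integral_eq_lintegral_ofReal]
    · exact ApproxAux.integrand_integrable hp hXc hvcont (ApproxAux.pwmax_continuous _) hω
    · filter_upwards [haeX] with x hx
      exact mul_nonneg (Real.rpow_nonneg (sub_nonneg.2 (hqA x hx)) p) (hωpos _).le
  have htendsub : Tendsto (fun k => ApproxAux.err p X v ω (ApproxAux.pwmax (θ2 k)))
      atTop (𝓝 (sInf S)) := hθ1tend.comp hφmono.tendsto_atTop
  have hlim2 : Filter.liminf (fun k => ∫⁻ x in X, ENNReal.ofReal (fk k x)) atTop =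
      ENNReal.ofReal (sInf S) := by
    have h1 : Tendsto (fun k => ENNReal.ofReal (ApproxAux.err p X v ω (ApproxAux.pwmax (θ2 k))))
        atTop (𝓝 (ENNReal.ofReal (sInf S))) :=
      (ENNReal.continuous_ofReal.tendsto _).comp htendsub
    rw [show (fun k => ∫⁻ x in X, ENNReal.ofReal (fk k x)) =
      fun k => ENNReal.ofReal (ApproxAux.err p X v ω (ApproxAux.pwmax (θ2 k))) from funext hid]
    exact h1.liminf_eq
  have hsInfnn : 0 ≤ sInf S := le_csInf hSne hS0
  have hle1 : ApproxAux.err p X v ω lstar ≤ sInf S := by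
    have h1 : ENNReal.ofReal (ApproxAux.err p X v ω lstar) ≤ ENNReal.ofReal (sInf S) := by
      rw [← hidstar, ← hlim2]; exact hchain
    exact (ENNReal.ofReal_le_ofReal_iff hsInfnn).1 h1
  have hge1 : sInf S ≤ ApproxAux.err p X v ω lstar :=
    csInf_le hSbdd ((hmemS _).2 ⟨q, hqA, rfl⟩)
  refine ⟨lstar, (ApproxAux.isPAC_iff_param (by omega) lstar).2 ⟨q, fun x => rfl, hqA⟩, ?_⟩
  rw [happrox, ← ApproxAux.err_def (p := p) (X := X) (v := v) (ω := ω) lstar]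
  exact le_antisymm hle1 hge1
end
end

section
/- Let X ⊂ ℝⁿ be a compact convex set with nonempty interior, and let v : X → ℝ be a convex function, Lipschitz with constant L, that is differentiable at every point of int(X). For each m, let S_m ⊂ int(X) be a nonempty finite set, and suppose sup_{x ∈ X} dist(x, S_m) → 0 as m → ∞. Define l_m(x) = max_{a ∈ S_m} ( v(a) + ∇v(a)·(x − a) ). Then l_m converges to v uniformly on X; in fact sup_{x ∈ X} |v(x) − l_m(x)| ≤ 2L · sup_{x ∈ X} dist(x, S_m). -/
open MeasureTheory Filter Metric Set
open scoped RealInnerProductSpace Topology NNReal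

noncomputable section

section Helpers

variable {n : ℕ}

lemma tangent_le {X : Set (Euc n)} {v : Euc n → ℝ}
    (hvconv : ConvexOn ℝ X v) {a : Euc n} (ha : a ∈ X)
    (hd : DifferentiableAt ℝ v a) {z : Euc n} (hz : z ∈ X) :
    v a + ⟪gradient v a, z - a⟫ ≤ v z := by
  set d : ℝ := ⟪gradient v a, z - a⟫ with hddef
  -- derivative of t ↦ v (a + t • (z - a)) at 0 is d
  have hγ : HasDerivAt (fun t : ℝ => a + t • (z - a)) (z - a) 0 := by
    simpa using ((hasDerivAt_id (0:ℝ)).smul_const (z - a)).const_add a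
  have hfd : HasFDerivAt v (InnerProductSpace.toDual ℝ (Euc n) (gradient v a)) a :=
    (hasGradientAt_iff_hasFDerivAt.mp hd.hasGradientAt)
  have hcomp : HasDerivAt (fun t : ℝ => v (a + t • (z - a))) d 0 := by
    have h0 : a + (0:ℝ) • (z - a) = a := by simp
    have hfd' : HasFDerivAt v (InnerProductSpace.toDual ℝ (Euc n) (gradient v a))
        ((fun t : ℝ => a + t • (z - a)) 0) := by simpa using hfd
    have hcomp := hfd'.comp_hasDerivAt 0 hγ
    simp only [InnerProductSpace.toDual_apply_apply] at hcomp
    exact hcomp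
  have hslope : Filter.Tendsto (slope (fun t : ℝ => v (a + t • (z - a))) 0)
      (nhdsWithin 0 (Set.Ioi 0)) (nhds d) :=
    (hasDerivAt_iff_tendsto_slope.mp hcomp).mono_left
      (nhdsWithin_mono 0 (fun t ht => ne_of_gt ht))
  have hev : ∀ᶠ t in nhdsWithin (0:ℝ) (Set.Ioi 0),
      slope (fun t : ℝ => v (a + t • (z - a))) 0 t ≤ v z - v a := by
    filter_upwards [Ioc_mem_nhdsGT (zero_lt_one (α := ℝ))] with t ht
    have ht0 : (0:ℝ) < t := ht.1
    have hcvx : v (a + t • (z - a)) ≤ (1 - t) * v a + t * v z := by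
      have hcomb := hvconv.2 ha hz (by linarith [ht.2] : (0:ℝ) ≤ 1 - t) ht0.le
        (by ring : (1 - t) + t = 1)
      have heq : (1 - t) • a + t • z = a + t • (z - a) := by
        rw [sub_smul, one_smul, smul_sub]; abel
      rw [heq] at hcomb
      simpa using hcomb
    rw [slope_def_field]
    have : (v (a + t • (z - a)) - v (a + (0:ℝ) • (z - a))) / (t - 0) ≤ v z - v a := by
      rw [sub_zero, div_le_iff₀ ht0]
      simp only [zero_smul, add_zero]
      nlinarith
    simpa [div_eq_inv_mul] using this
  have := le_of_tendsto hslope hev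
  linarith

lemma grad_lower {X : Set (Euc n)} {v : Euc n → ℝ} {L : ℝ}
    (hvconv : ConvexOn ℝ X v)
    (hlip : ∀ x ∈ X, ∀ y ∈ X, |v x - v y| ≤ L * ‖x - y‖)
    {a : Euc n} (ha : a ∈ interior X) (hd : DifferentiableAt ℝ v a)
    {x : Euc n} (hx : x ∈ X) :
    -(L * ‖x - a‖) ≤ ⟪gradient v a, x - a⟫ := by
  by_cases hxa : x = a
  · simp [hxa]
  · have hna : (0:ℝ) < ‖x - a‖ := by
      rw [norm_pos_iff]; exact sub_ne_zero.mpr hxa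
    obtain ⟨ε, hε, hball⟩ := Metric.mem_nhds_iff.mp (mem_interior_iff_mem_nhds.mp ha)
    set t : ℝ := ε / (2 * ‖x - a‖) with htdef
    have ht0 : 0 < t := by positivity
    set z : Euc n := a + (-t) • (x - a) with hzdef
    have hza : z - a = (-t) • (x - a) := by rw [hzdef]; abel
    have hzn : ‖z - a‖ = t * ‖x - a‖ := by
      rw [hza, norm_smul]; simp [abs_of_pos ht0]
    have hhalf : t * ‖x - a‖ = ε / 2 := by
      rw [htdef]; field_simp
    have hzX : z ∈ X := by
      apply hball
      rw [Metric.mem_ball, dist_eq_norm, hzn, hhalf]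
      linarith
    have htan := tangent_le hvconv (interior_subset ha) hd hzX
    have hlz : v z - v a ≤ L * (t * ‖x - a‖) := by
      calc v z - v a ≤ |v z - v a| := le_abs_self _
        _ ≤ L * ‖z - a‖ := hlip z hzX a (interior_subset ha)
        _ = L * (t * ‖x - a‖) := by rw [hzn]
    have hinner : ⟪gradient v a, z - a⟫ = -t * ⟪gradient v a, x - a⟫ := by
      rw [hza, real_inner_smul_right]
    rw [hinner] at htan
    have h2 : (-⟪gradient v a, x - a⟫) * t ≤ (L * ‖x - a‖) * t := by linarith
    have h3 := le_of_mul_le_mul_right h2 ht0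
    linarith

end Helpers

/-- tangent-plane piecewise affine approximations built on point sets
that become dense in `X` converge uniformly to `v`, with explicit bound
`|v - l_m| ≤ 2 L · sup_{x ∈ X} dist(x, S_m)` on `X`. -/
theorem tangent_max_uniform_convergence (n : ℕ) (X : Set (Euc n)) (hXc : IsCompact X)
    (hXconv : Convex ℝ X) (hXint : (interior X).Nonempty)
    (v : Euc n → ℝ) (hvconv : ConvexOn ℝ X v) (L : ℝ)
    (hlip : ∀ x ∈ X, ∀ y ∈ X, |v x - v y| ≤ L * ‖x - y‖)
    (hdiff : ∀ x ∈ interior X, DifferentiableAt ℝ v x)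
    (S : ℕ → Finset (Euc n)) (hS : ∀ m, (S m).Nonempty)
    (hSX : ∀ m, ↑(S m) ⊆ interior X)
    (hdist : Tendsto (fun m : ℕ => sSup ((fun x => Metric.infDist x ↑(S m)) '' X))
      atTop (nhds 0))
    (l : ℕ → Euc n → ℝ)
    (hl : ∀ m x, l m x = (S m).sup' (hS m) fun a => v a + ⟪gradient v a, x - a⟫) :
    TendstoUniformlyOn (fun m => l m) v atTop X ∧
    ∀ m : ℕ, ∀ x ∈ X,
      |v x - l m x| ≤ 2 * L * sSup ((fun y => Metric.infDist y ↑(S m)) '' X) := by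
  
  have hXne : X.Nonempty := ⟨hXint.choose, interior_subset hXint.choose_spec⟩
  set D : ℕ → ℝ := fun m => sSup ((fun y => Metric.infDist y ↑(S m)) '' X) with hDdef
  have hle : ∀ m, ∀ x ∈ X, l m x ≤ v x := by
    intro m x hx
    rw [hl]
    apply Finset.sup'_le
    intro a haS
    exact tangent_le hvconv (interior_subset (hSX m haS)) (hdiff a (hSX m haS)) hx
  have key : ∀ m, ∀ x ∈ X, |v x - l m x| ≤ 2 * L * Metric.infDist x ↑(S m) := by
    intro m x hx
    obtain ⟨a, haS, hda⟩ := ((S m).finite_toSet.isCompact).exists_infDist_eq_dist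
      (Finset.coe_nonempty.mpr (hS m)) x
    have haint : a ∈ interior X := hSX m haS
    have haX : a ∈ X := interior_subset haint
    have hd := hdiff a haint
    have h1 : v x - v a ≤ L * ‖x - a‖ := by
      calc v x - v a ≤ |v x - v a| := le_abs_self _
        _ ≤ L * ‖x - a‖ := hlip x hx a haX
    have h2 := grad_lower hvconv hlip haint hd hx
    have h3 : v a + ⟪gradient v a, x - a⟫ ≤ l m x := by
      rw [hl]
      exact Finset.le_sup' (f := fun a => v a + ⟪gradient v a, x - a⟫) haS
    have h4 : l m x ≤ v x := hle m x hx
    rw [abs_of_nonneg (by linarith)]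
    rw [hda, dist_eq_norm]
    linarith
  have hbdd : ∀ m, BddAbove ((fun y => Metric.infDist y ↑(S m)) '' X) := fun m =>
    (hXc.image (continuous_infDist_pt _)).bddAbove
  have hDge : ∀ m, ∀ x ∈ X, Metric.infDist x ↑(S m) ≤ D m := fun m x hx =>
    le_csSup (hbdd m) ⟨x, hx, rfl⟩
  have hD0 : ∀ m, 0 ≤ D m := by
    intro m
    obtain ⟨x0, hx0⟩ := hXne
    exact le_trans Metric.infDist_nonneg (hDge m x0 hx0)
  have bound : ∀ m, ∀ x ∈ X, |v x - l m x| ≤ 2 * L * D m := by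
    intro m x hx
    rcases le_or_gt 0 L with hL | hL
    · calc |v x - l m x| ≤ 2 * L * Metric.infDist x ↑(S m) := key m x hx
        _ ≤ 2 * L * D m := by
          apply mul_le_mul_of_nonneg_left (hDge m x hx); linarith
    · have hzero : ∀ y ∈ X, Metric.infDist y ↑(S m) = 0 := by
        intro y hy
        have h1 := key m y hy
        have h2 : (0:ℝ) ≤ |v y - l m y| := abs_nonneg _
        have h3 := Metric.infDist_nonneg (x := y) (s := (↑(S m) : Set (Euc n)))
        nlinarith
      have hDm : D m = 0 := le_antisymm
        (csSup_le (hXne.image _) (by rintro r ⟨y, hy, rfl⟩; exact (hzero y hy).le))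
        (hD0 m)
      have hk := key m x hx
      rw [hzero x hx] at hk
      rw [hDm]
      linarith
  refine ⟨?_, bound⟩
  rw [Metric.tendstoUniformlyOn_iff]
  intro ε hε
  have htend : Tendsto (fun m => 2 * |L| * D m) atTop (nhds 0) := by
    simpa using hdist.const_mul (2 * |L|)
  filter_upwards [htend.eventually (eventually_lt_nhds hε)] with m hm x hx
  rw [Real.dist_eq]
  calc |v x - l m x| ≤ 2 * L * D m := bound m x hx
    _ ≤ 2 * |L| * D m := by
        apply mul_le_mul_of_nonneg_right _ (hD0 m)
        have := le_abs_self L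
        linarith
    _ < ε := hm
end
end
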